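/- arXiv:2001.07599 — 10 statements merged into one kernel-verified Lean document; each statement's English description precedes it below -/
import Mathlib

section
/- Let n ≥ 1 and let H and G be symmetric n×n complex matrices such that Im H and Im G are positive definite. Let a, b ∈ ℝⁿ with (a, b) ≠ (0, 0). Then the (n+1)×(n+1) complex block matrix N = [[H + G, b − H·a], [(b − H·a)ᵀ, (H·a − b)·a]] — top-left block H + G of size n×n, top-right column vector b − H·a, bottom-left row (b − H·a)ᵀ, bottom-right scalar (H·a − b)·a — has nonzero determinant. (This is the invertibility of the Hessian ∇²Θ at an intersection point of a Gaussian beam and a Gaussian wave packet, proved in Step 7, Case 7c, of the quasimode construction.) -/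
open Matrix

private lemma sum_swap_symm {ι : Type*} [Fintype ι] (P : ι → ι → ℝ)
    (hP : ∀ i j, P j i = P i j) (f g : ι → ℝ) :
    ∑ i, ∑ j, P i j * (f i * g j) = ∑ i, ∑ j, P i j * (f j * g i) := by
  rw [Finset.sum_comm]
  refine Finset.sum_congr rfl fun i _ => Finset.sum_congr rfl fun j _ => ?_
  rw [hP i j]

/-- Invertibility of the Hessian `∇²Θ` at an intersection point of a
Gaussian beam and a Gaussian wave packet (Step 7, Case 7c of the quasimode construction):
for symmetric complex `n × n` matrices `H`, `G` with positive definite imaginary parts and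
real vectors `a`, `b` not both zero, the block matrix
`N = [[H + G, b − H·a], [(b − H·a)ᵀ, (H·a − b)·a]]` has nonzero determinant. -/
theorem hessian_block_det_ne_zero (n : ℕ) (hn : 1 ≤ n)
    (H G : Matrix (Fin n) (Fin n) ℂ)
    (hHsymm : H.IsSymm) (hGsymm : G.IsSymm)
    (hHpos : (Matrix.of fun i j => (H i j).im : Matrix (Fin n) (Fin n) ℝ).PosDef)
    (hGpos : (Matrix.of fun i j => (G i j).im : Matrix (Fin n) (Fin n) ℝ).PosDef)
    (a b : Fin n → ℝ) (hab : ¬ (a = 0 ∧ b = 0))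
    (N : Matrix (Fin n ⊕ Unit) (Fin n ⊕ Unit) ℂ)
    (hN : N = Matrix.fromBlocks (H + G)
        (Matrix.of fun i (_ : Unit) =>
          (b i : ℂ) - H.mulVec (fun j => (a j : ℂ)) i)
        (Matrix.of fun (_ : Unit) j =>
          (b j : ℂ) - H.mulVec (fun k => (a k : ℂ)) j)
        (Matrix.of fun (_ : Unit) (_ : Unit) =>
          (H.mulVec (fun j => (a j : ℂ)) - fun i => (b i : ℂ)) ⬝ᵥ (fun j => (a j : ℂ)))) :
    N.det ≠ 0 := by
  classical
  set H' : Matrix (Fin n) (Fin n) ℝ := Matrix.of fun i j => (H i j).im with hH'def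
  set G' : Matrix (Fin n) (Fin n) ℝ := Matrix.of fun i j => (G i j).im with hG'def
  have hH'symm : ∀ i j, H' j i = H' i j := by
    intro i j
    simp only [hH'def, Matrix.of_apply]
    rw [hHsymm.apply i j]
  have hG'symm : ∀ i j, G' j i = G' i j := by
    intro i j
    simp only [hG'def, Matrix.of_apply]
    rw [hGsymm.apply i j]
  have hH'T : H'ᵀ = H' := by
    ext i j
    rw [Matrix.transpose_apply, hH'symm i j]
  -- imaginary part of H *ᵥ a
  have hHa : ∀ i, (H.mulVec (fun j => (a j : ℂ)) i).im = (H' *ᵥ a) i := by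
    intro i
    simp [Matrix.mulVec, dotProduct, Complex.im_sum, Complex.mul_im, hH'def]
  -- symmetry of N
  have hNsymm : ∀ i j, N j i = N i j := by
    rintro (i | i) (j | j) <;>
      simp [hN, Matrix.fromBlocks, hHsymm.apply, hGsymm.apply, Matrix.add_apply]
  -- the imaginary-part matrix of N
  set Q : Matrix (Fin n ⊕ Unit) (Fin n ⊕ Unit) ℝ :=
    Matrix.of fun i j => (N i j).im with hQdef
  have hQblocks : Q = Matrix.fromBlocks (H' + G')
      (Matrix.of fun i (_ : Unit) => -((H' *ᵥ a) i))
      (Matrix.of fun (_ : Unit) j => -((H' *ᵥ a) j))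
      (Matrix.of fun (_ : Unit) (_ : Unit) => a ⬝ᵥ (H' *ᵥ a)) := by
    ext (i | i) (j | j) <;>
      simp [hQdef, hN, Matrix.fromBlocks, hHa, hH'def, hG'def, Matrix.add_apply,
        dotProduct, Complex.im_sum, Complex.mul_im, Complex.sub_im,
        Finset.sum_neg_distrib, mul_comm]
  -- the key quadratic form identity
  have hsymdot : ∀ z : Fin n → ℝ, a ⬝ᵥ (H' *ᵥ z) = (H' *ᵥ a) ⬝ᵥ z := by
    intro z
    rw [Matrix.dotProduct_mulVec, ← hH'T, Matrix.vecMul_transpose, hH'T]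
  have key : ∀ w : Fin n ⊕ Unit → ℝ,
      w ⬝ᵥ (Q *ᵥ w) =
        ((fun i => w (Sum.inl i)) - w (Sum.inr ()) • a) ⬝ᵥ
            (H' *ᵥ ((fun i => w (Sum.inl i)) - w (Sum.inr ()) • a)) +
          (fun i => w (Sum.inl i)) ⬝ᵥ (G' *ᵥ fun i => w (Sum.inl i)) := by
    intro w
    set u : Fin n → ℝ := fun i => w (Sum.inl i) with hu
    set s : ℝ := w (Sum.inr ()) with hs
    have hw : w = Sum.elim u (fun _ => s) := by
      funext i
      rcases i with i | i
      · rfl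
      · rfl
    rw [hQblocks, hw, Matrix.fromBlocks_mulVec, sumElim_dotProduct_sumElim]
    simp only [Sum.elim_comp_inl, Sum.elim_comp_inr]
    have h1 : (Matrix.of fun i (_ : Unit) => -((H' *ᵥ a) i)) *ᵥ (fun _ => s)
        = (-s) • (H' *ᵥ a) := by
      funext i
      simp [Matrix.mulVec, dotProduct]
      ring
    have h2 : (Matrix.of fun (_ : Unit) j => -((H' *ᵥ a) j)) *ᵥ u
        = fun _ => -((H' *ᵥ a) ⬝ᵥ u) := by
      funext i
      simp [Matrix.mulVec, dotProduct, Finset.sum_neg_distrib]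
    have h3 : (Matrix.of fun (_ : Unit) (_ : Unit) => a ⬝ᵥ (H' *ᵥ a)) *ᵥ (fun _ => s)
        = fun _ => (a ⬝ᵥ (H' *ᵥ a)) * s := by
      funext i
      simp [Matrix.mulVec, dotProduct]
    rw [h1, h2, h3]
    rw [Matrix.mulVec_sub, Matrix.mulVec_smul, sub_dotProduct, dotProduct_sub,
      dotProduct_sub, smul_dotProduct, dotProduct_smul,
      dotProduct_smul, Matrix.add_mulVec, dotProduct_add, dotProduct_add,
      dotProduct_smul, hsymdot]
    have h4 : ∀ c : Unit → ℝ, (fun _ : Unit => s) ⬝ᵥ c = s * c () := by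
      intro c; simp [dotProduct]
    rw [h4]
    simp only [Pi.add_apply, smul_eq_mul]
    rw [smul_dotProduct, hsymdot u, hsymdot a]
    simp only [smul_eq_mul]
    ring
  -- main argument
  intro hdet
  obtain ⟨v, hv0, hv⟩ := Matrix.exists_mulVec_eq_zero_iff.mpr hdet
  set x : Fin n ⊕ Unit → ℝ := fun i => (v i).re with hxdef
  set y : Fin n ⊕ Unit → ℝ := fun i => (v i).im with hydef
  have hvi : ∀ i, ∑ j, N i j * v j = 0 := by
    intro i
    have h := congrFun hv i
    simpa [Matrix.mulVec, dotProduct] using h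
  have hre : ∀ i, ∑ j, ((N i j).re * x j - (N i j).im * y j) = 0 := by
    intro i
    have h := congrArg Complex.re (hvi i)
    simpa [Complex.re_sum, Complex.mul_re, sub_eq_add_neg] using h
  have him : ∀ i, ∑ j, ((N i j).re * y j + (N i j).im * x j) = 0 := by
    intro i
    have h := congrArg Complex.im (hvi i)
    simpa [Complex.im_sum, Complex.mul_im] using h
  have h1 : ∑ i, ∑ j, ((N i j).im * (x i * x j) + (N i j).im * (y i * y j)
      + ((N i j).re * (x i * y j) - (N i j).re * (x j * y i))) = 0 := by
    calc ∑ i, ∑ j, ((N i j).im * (x i * x j) + (N i j).im * (y i * y j)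
          + ((N i j).re * (x i * y j) - (N i j).re * (x j * y i)))
        = ∑ i, (x i * (∑ j, ((N i j).re * y j + (N i j).im * x j))
            - y i * (∑ j, ((N i j).re * x j - (N i j).im * y j))) := by
          refine Finset.sum_congr rfl fun i _ => ?_
          rw [Finset.mul_sum, Finset.mul_sum, ← Finset.sum_sub_distrib]
          refine Finset.sum_congr rfl fun j _ => ?_
          ring
      _ = 0 := by
          refine Finset.sum_eq_zero fun i _ => ?_
          rw [him i, hre i]
          ring
  simp only [Finset.sum_add_distrib, Finset.sum_sub_distrib] at h1
  have hswap := sum_swap_symm (fun i j => (N i j).re)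
    (fun i j => congrArg Complex.re (hNsymm i j)) x y
  rw [hswap, sub_self, add_zero] at h1
  have hXQ : ∀ w : Fin n ⊕ Unit → ℝ,
      ∑ i, ∑ j, (N i j).im * (w i * w j) = w ⬝ᵥ (Q *ᵥ w) := by
    intro w
    simp only [dotProduct, Matrix.mulVec, hQdef, Matrix.of_apply, Finset.mul_sum]
    exact Finset.sum_congr rfl fun i _ => Finset.sum_congr rfl fun j _ => by ring
  rw [hXQ x, hXQ y, key x, key y] at h1
  -- positivity facts
  have hqH : ∀ z : Fin n → ℝ, 0 ≤ z ⬝ᵥ (H' *ᵥ z) := fun z => by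
    simpa using hHpos.posSemidef.dotProduct_mulVec_nonneg z
  have hqG : ∀ z : Fin n → ℝ, 0 ≤ z ⬝ᵥ (G' *ᵥ z) := fun z => by
    simpa using hGpos.posSemidef.dotProduct_mulVec_nonneg z
  have hqH' : ∀ z : Fin n → ℝ, z ≠ 0 → 0 < z ⬝ᵥ (H' *ᵥ z) := fun z hz => by
    simpa using hHpos.dotProduct_mulVec_pos hz
  have hqG' : ∀ z : Fin n → ℝ, z ≠ 0 → 0 < z ⬝ᵥ (G' *ᵥ z) := fun z hz => by
    simpa using hGpos.dotProduct_mulVec_pos hz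
  have hx1 : ((fun i => x (Sum.inl i)) - x (Sum.inr ()) • a) = 0 := by
    by_contra hne
    have hpos := hqH' _ hne
    have c1 := hqH ((fun i => y (Sum.inl i)) - y (Sum.inr ()) • a)
    have c2 := hqG (fun i => x (Sum.inl i))
    have c3 := hqG (fun i => y (Sum.inl i))
    linarith
  have hy1 : ((fun i => y (Sum.inl i)) - y (Sum.inr ()) • a) = 0 := by
    by_contra hne
    have hpos := hqH' _ hne
    have c1 := hqH ((fun i => x (Sum.inl i)) - x (Sum.inr ()) • a)
    have c2 := hqG (fun i => x (Sum.inl i))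
    have c3 := hqG (fun i => y (Sum.inl i))
    linarith
  have hx2 : (fun i => x (Sum.inl i)) = 0 := by
    by_contra hne
    have hpos := hqG' _ hne
    have c1 := hqH ((fun i => x (Sum.inl i)) - x (Sum.inr ()) • a)
    have c2 := hqH ((fun i => y (Sum.inl i)) - y (Sum.inr ()) • a)
    have c3 := hqG (fun i => y (Sum.inl i))
    linarith
  have hy2 : (fun i => y (Sum.inl i)) = 0 := by
    by_contra hne
    have hpos := hqG' _ hne
    have c1 := hqH ((fun i => x (Sum.inl i)) - x (Sum.inr ()) • a)
    have c2 := hqH ((fun i => y (Sum.inl i)) - y (Sum.inr ()) • a)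
    have c3 := hqG (fun i => x (Sum.inl i))
    linarith
  have hvinl : ∀ j, v (Sum.inl j) = 0 := by
    intro j
    have hxj : x (Sum.inl j) = 0 := congrFun hx2 j
    have hyj : y (Sum.inl j) = 0 := congrFun hy2 j
    apply Complex.ext
    · simpa [hxdef] using hxj
    · simpa [hydef] using hyj
  have hsx : x (Sum.inr ()) • a = 0 := by
    have h := sub_eq_zero.mp hx1
    rw [hx2] at h
    exact h.symm
  have hsy : y (Sum.inr ()) • a = 0 := by
    have h := sub_eq_zero.mp hy1
    rw [hy2] at h
    exact h.symm
  have ht : v (Sum.inr ()) = 0 := by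
    by_contra htne
    have ha0 : a = 0 := by
      rcases smul_eq_zero.mp hsx with h | h
      · rcases smul_eq_zero.mp hsy with h' | h'
        · exact absurd (Complex.ext h h') htne
        · exact h'
      · exact h
    have hHa0 : (H *ᵥ fun j => ((a j : ℝ) : ℂ)) = 0 := by
      funext i
      simp [ha0, Matrix.mulVec, dotProduct]
    have hb0 : b = 0 := by
      funext i
      have hb := hvi (Sum.inl i)
      rw [Fintype.sum_sum_type] at hb
      simp only [hvinl, mul_zero, Finset.sum_const_zero, zero_add, hN,
        Matrix.fromBlocks_apply₁₂, Matrix.of_apply, hHa0, Pi.zero_apply, sub_zero,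
        Finset.univ_unique, Finset.sum_singleton] at hb
      rcases mul_eq_zero.mp hb with h | h
      · exact_mod_cast h
      · exact absurd h htne
    exact hab ⟨ha0, hb0⟩
  apply hv0
  funext i
  rcases i with j | u
  · exact hvinl j
  · exact ht
end

section
/- Let n ≥ 1, let B, C, D : ℝ → Mₙ(ℝ), and let H : ℝ → Mₙ(ℂ) be differentiable and satisfy the matrix Riccati equation H′(s) + H(s)C(s)H(s) + B(s)H(s) + H(s)B(s)ᵀ + D(s) = 0 for all s. Let x, ξ : ℝ → ℝⁿ be twice differentiable with x″(s) = B(s)ᵀ x′(s) + C(s) ξ′(s) and ξ″(s) = −D(s) x′(s) − B(s) ξ′(s) for all s. Define ρ(s) = H(s)·x′(s) − ξ′(s) ∈ ℂⁿ. Then ρ is differentiable with ρ′(s) = −(H(s)C(s) + B(s))·ρ(s) for every s ∈ ℝ. -/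
open Matrix

lemma map_mulVec_ofReal {n : ℕ} (A : Matrix (Fin n) (Fin n) ℝ) (v : Fin n → ℝ) :
    (A.map Complex.ofReal).mulVec (fun i => (v i : ℂ)) = fun i => ((A.mulVec v) i : ℂ) := by
  funext i
  simp [Matrix.mulVec, dotProduct]

/-- If `H` solves the matrix Riccati equation
`H′ + HCH + BH + HBᵀ + D = 0`, and `x, ξ` solve `x″ = Bᵀx′ + Cξ′`,
`ξ″ = −Dx′ − Bξ′`, then `ρ(s) = H(s)·x′(s) − ξ′(s)` satisfies
`ρ′(s) = −(H(s)C(s) + B(s))·ρ(s)`. -/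
theorem riccati_rho_derivative (n : ℕ) (hn : 1 ≤ n)
    (B C D : ℝ → Matrix (Fin n) (Fin n) ℝ)
    (H H' : ℝ → Matrix (Fin n) (Fin n) ℂ)
    (hH : ∀ s, ∀ i j, HasDerivAt (fun t => H t i j) (H' s i j) s)
    (hRic : ∀ s, H' s + H s * (C s).map (Complex.ofReal) * H s
        + (B s).map (Complex.ofReal) * H s
        + H s * ((B s).map (Complex.ofReal))ᵀ
        + (D s).map (Complex.ofReal) = 0)
    (x ξ x' ξ' x'' ξ'' : ℝ → Fin n → ℝ)
    (hx : ∀ s, HasDerivAt x (x' s) s)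
    (hx' : ∀ s, HasDerivAt x' (x'' s) s)
    (hξ : ∀ s, HasDerivAt ξ (ξ' s) s)
    (hξ' : ∀ s, HasDerivAt ξ' (ξ'' s) s)
    (hxeq : ∀ s, x'' s = (B s)ᵀ.mulVec (x' s) + (C s).mulVec (ξ' s))
    (hξeq : ∀ s, ξ'' s = -((D s).mulVec (x' s)) - (B s).mulVec (ξ' s))
    (ρ : ℝ → Fin n → ℂ)
    (hρ : ρ = fun s => (H s).mulVec (fun i => (x' s i : ℂ)) - fun i => (ξ' s i : ℂ)) :
    ∀ s : ℝ, HasDerivAt ρ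
      (-((H s * (C s).map (Complex.ofReal) + (B s).map (Complex.ofReal)).mulVec (ρ s))) s := by
  intro s
  set Bc := (B s).map Complex.ofReal with hBc
  set Cc := (C s).map Complex.ofReal with hCc
  set Dc := (D s).map Complex.ofReal with hDc
  set cx' : Fin n → ℂ := fun i => (x' s i : ℂ) with hcx'
  set cξ' : Fin n → ℂ := fun i => (ξ' s i : ℂ) with hcξ'
  have hH' : H' s = -(H s * Cc * H s) - Bc * H s - H s * Bcᵀ - Dc := by
    have h := hRic s
    rw [← hBc, ← hCc, ← hDc] at h
    linear_combination (norm := noncomm_ring) h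
  have key : -((H s * Cc + Bc).mulVec (ρ s))
      = (H' s).mulVec cx'
        + (H s).mulVec (fun i => (x'' s i : ℂ))
        - (fun i => (ξ'' s i : ℂ)) := by
    have hx2 : (fun i => (x'' s i : ℂ)) = Bcᵀ.mulVec cx' + Cc.mulVec cξ' := by
      rw [hxeq s, hBc, ← Matrix.transpose_map, hcx', hcξ', map_mulVec_ofReal, map_mulVec_ofReal]
      funext i; simp [Pi.add_apply]
    have hξ2 : (fun i => (ξ'' s i : ℂ)) = -(Dc.mulVec cx') - Bc.mulVec cξ' := by
      rw [hξeq s, hcx', hcξ', map_mulVec_ofReal, map_mulVec_ofReal]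
      funext i; simp [Pi.sub_apply, Pi.neg_apply]
    rw [hH', hx2, hξ2, hρ]
    simp only [Matrix.add_mulVec, Matrix.sub_mulVec, Matrix.neg_mulVec, Matrix.mulVec_add,
      Matrix.mulVec_sub, Matrix.mulVec_neg, ← Matrix.mulVec_mulVec]
    abel
  rw [key, hρ]
  rw [hasDerivAt_pi]
  intro i
  have hxi : ∀ j, HasDerivAt (fun t => ((x' t j : ℂ))) ((x'' s j : ℂ)) s :=
    fun j => ((hasDerivAt_pi.mp (hx' s)) j).ofReal_comp
  have hξi : HasDerivAt (fun t => ((ξ' t i : ℂ))) ((ξ'' s i : ℂ)) s :=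
    ((hasDerivAt_pi.mp (hξ' s)) i).ofReal_comp
  have hsum : HasDerivAt (fun t => ∑ j, H t i j * (x' t j : ℂ))
      (∑ j, (H' s i j * (x' s j : ℂ) + H s i j * (x'' s j : ℂ))) s := by
    apply HasDerivAt.fun_sum
    intro j _
    exact (hH s i j).mul (hxi j)
  have := hsum.sub hξi
  convert this using 1
  simp [Matrix.mulVec, dotProduct, Finset.sum_add_distrib]
  · rfl
  · simp [Matrix.mulVec, dotProduct, Finset.sum_add_distrib, hcx']
end

section
/- Let n ≥ 1, let H be a symmetric n×n complex matrix, let a, b ∈ ℝⁿ, let v ∈ ℂⁿ and z ∈ ℂ. Let N be the (n+1)×(n+1) complex block matrix N = [[H, b − H·a], [(b − H·a)ᵀ, (H·a − b)·a]] and let ζ = (v, z) ∈ ℂⁿ⁺¹. Then the imaginary part of the quadratic form Σ_{k,l} conj(ζ_k) N_{k,l} ζ_l equals Σ_{i,j} (Im H)_{i,j} conj(v_i − a_i z)(v_j − a_j z); in particular, if Im H is positive definite and this imaginary part vanishes, then v = a·z (componentwise v_i = a_i z). (This is the key imaginary-part computation used to prove invertibility of the phase Hessians in the quasimode and boundary determination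 arguments.) -/
open Matrix

private lemma msm {n : ℕ} (c d : ℂ) (f : Fin n → ℂ) :
    c * (∑ j, f j) * d = ∑ j, c * f j * d := by
  rw [Finset.mul_sum, Finset.sum_mul]

/-- The key imaginary-part computation for the phase Hessians: for a
symmetric complex matrix `H`, real vectors `a, b`, `v ∈ ℂⁿ`, `z ∈ ℂ`, the imaginary part
of the quadratic form of the block matrix `N = [[H, b − H·a], [(b − H·a)ᵀ, (H·a − b)·a]]`
at `ζ = (v, z)` equals `Σᵢⱼ (Im H)ᵢⱼ conj(vᵢ − aᵢ z)(vⱼ − aⱼ z)`; in particular, if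
`Im H` is positive definite and this imaginary part vanishes, then `v = a·z`. -/
theorem imaginary_part_quadratic_form (n : ℕ) (hn : 1 ≤ n)
    (H : Matrix (Fin n) (Fin n) ℂ) (hHsymm : H.IsSymm)
    (a b : Fin n → ℝ) (v : Fin n → ℂ) (z : ℂ)
    (w : Fin n → ℂ)
    (hw : w = fun i => (b i : ℂ) - H.mulVec (fun j => (a j : ℂ)) i)
    (N : Matrix (Fin n ⊕ Unit) (Fin n ⊕ Unit) ℂ)
    (hN : N = Matrix.fromBlocks H
        (Matrix.of fun i (_ : Unit) => w i)
        (Matrix.of fun (_ : Unit) j => w j)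
        (Matrix.of fun (_ : Unit) (_ : Unit) =>
          (H.mulVec (fun j => (a j : ℂ)) - fun i => (b i : ℂ)) ⬝ᵥ (fun j => (a j : ℂ))))
    (ζ : Fin n ⊕ Unit → ℂ) (hζ : ζ = Sum.elim v fun _ => z) :
    (((∑ k, ∑ l, (starRingEnd ℂ) (ζ k) * N k l * ζ l).im : ℂ) =
        ∑ i, ∑ j, ((H i j).im : ℂ) *
          (starRingEnd ℂ) (v i - (a i : ℂ) * z) * (v j - (a j : ℂ) * z)) ∧
      ((Matrix.of fun i j => (H i j).im : Matrix (Fin n) (Fin n) ℝ).PosDef →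
        (∑ k, ∑ l, (starRingEnd ℂ) (ζ k) * N k l * ζ l).im = 0 →
        ∀ i, v i = (a i : ℂ) * z) := by
  have hsymm : ∀ i j, H j i = H i j := fun i j => by
    conv_lhs => rw [← hHsymm]
    rfl
  set Q : ℂ := ∑ k, ∑ l, (starRingEnd ℂ) (ζ k) * N k l * ζ l with hQdef
  set T : ℂ := ∑ i, ∑ j, ((H i j).im : ℂ) *
      (starRingEnd ℂ) (v i - (a i : ℂ) * z) * (v j - (a j : ℂ) * z) with hTdef
  -- Step 1: expand Q into the four blocks
  have hQ : Q = (∑ i, ∑ j, (starRingEnd ℂ) (v i) * H i j * v j)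
      + (∑ i, (starRingEnd ℂ) (v i) * ((b i : ℂ) - ∑ j, H i j * (a j : ℂ)) * z)
      + (∑ j, (starRingEnd ℂ) z * ((b j : ℂ) - ∑ i, H j i * (a i : ℂ)) * v j)
      + (starRingEnd ℂ) z * (∑ j, ((∑ i, H j i * (a i : ℂ)) - (b j : ℂ)) * (a j : ℂ)) * z := by
    rw [hQdef]
    subst hw hN hζ
    simp [Fintype.sum_sum_type, mulVec, dotProduct, Finset.sum_add_distrib, add_assoc]
    ring
  -- Step 2: Q = S + R with R "real" (conj-invariant)
  set S : ℂ := ∑ i, ∑ j, (starRingEnd ℂ) (v i - (a i : ℂ) * z) * H i j * (v j - (a j : ℂ) * z)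
    with hSdef
  set R : ℂ := z * ∑ i, (b i : ℂ) * (starRingEnd ℂ) (v i)
      + (starRingEnd ℂ) z * ∑ i, (b i : ℂ) * v i
      - (starRingEnd ℂ) z * z * ∑ i, (b i : ℂ) * (a i : ℂ) with hRdef
  have hQSR : Q = S + R := by
    rw [hQ, hSdef, hRdef]
    have hS : (∑ i, ∑ j, (starRingEnd ℂ) (v i - (a i : ℂ) * z) * H i j * (v j - (a j : ℂ) * z))
        = (∑ i, ∑ j, (starRingEnd ℂ) (v i) * H i j * v j)
          - (∑ i, ∑ j, (a i : ℂ) * (starRingEnd ℂ) z * H i j * v j)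
          - (∑ i, ∑ j, (starRingEnd ℂ) (v i) * H i j * (a j : ℂ) * z)
          + (∑ i, ∑ j, (a i : ℂ) * (a j : ℂ) * (starRingEnd ℂ) z * z * H i j) := by
      rw [← Finset.sum_sub_distrib, ← Finset.sum_sub_distrib, ← Finset.sum_add_distrib]
      refine Finset.sum_congr rfl fun i _ => ?_
      rw [← Finset.sum_sub_distrib, ← Finset.sum_sub_distrib, ← Finset.sum_add_distrib]
      refine Finset.sum_congr rfl fun j _ => ?_
      simp only [map_sub, _root_.map_mul, Complex.conj_ofReal]
      ring
    have hB : (∑ i, (starRingEnd ℂ) (v i) * ((b i : ℂ) - ∑ j, H i j * (a j : ℂ)) * z)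
        = (z * ∑ i, (b i : ℂ) * (starRingEnd ℂ) (v i))
          - (∑ i, ∑ j, (starRingEnd ℂ) (v i) * H i j * (a j : ℂ) * z) := by
      rw [Finset.mul_sum, ← Finset.sum_sub_distrib]
      refine Finset.sum_congr rfl fun i _ => ?_
      rw [mul_sub, sub_mul, msm]
      congr 1
      · ring
      · exact Finset.sum_congr rfl fun j _ => by ring
    have hC : (∑ j, (starRingEnd ℂ) z * ((b j : ℂ) - ∑ i, H j i * (a i : ℂ)) * v j)
        = ((starRingEnd ℂ) z * ∑ i, (b i : ℂ) * v i)
          - (∑ i, ∑ j, (a i : ℂ) * (starRingEnd ℂ) z * H i j * v j) := by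
      rw [Finset.mul_sum,
        Finset.sum_comm (f := fun i j => (a i : ℂ) * (starRingEnd ℂ) z * H i j * v j),
        ← Finset.sum_sub_distrib]
      refine Finset.sum_congr rfl fun j _ => ?_
      rw [mul_sub, sub_mul, msm]
      congr 1
      · ring
      · exact Finset.sum_congr rfl fun i _ => by rw [hsymm j i]; ring
    have hD : (starRingEnd ℂ) z * (∑ j, ((∑ i, H j i * (a i : ℂ)) - (b j : ℂ)) * (a j : ℂ)) * z
        = (∑ i, ∑ j, (a i : ℂ) * (a j : ℂ) * (starRingEnd ℂ) z * z * H i j)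
          - (starRingEnd ℂ) z * z * ∑ i, (b i : ℂ) * (a i : ℂ) := by
      rw [msm, Finset.mul_sum,
        Finset.sum_comm (f := fun i j => (a i : ℂ) * (a j : ℂ) * (starRingEnd ℂ) z * z * H i j),
        ← Finset.sum_sub_distrib]
      refine Finset.sum_congr rfl fun j _ => ?_
      rw [sub_mul, mul_sub, sub_mul, Finset.sum_mul, Finset.mul_sum, Finset.sum_mul]
      congr 1
      · exact Finset.sum_congr rfl fun i _ => by rw [hsymm j i]; ring
      · ring
    rw [hS, hB, hC, hD]
    ring
  -- Step 3: R is conj-invariant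
  have hR : (starRingEnd ℂ) R = R := by
    rw [hRdef]
    simp only [map_sub, map_add, _root_.map_mul, map_sum, Complex.conj_ofReal,
      Complex.conj_conj]
    ring
  -- Step 4: S - conj S = 2 I T
  have hSS : S - (starRingEnd ℂ) S = 2 * Complex.I * T := by
    have hconj : (starRingEnd ℂ) S
        = ∑ i, ∑ j, (v j - (a j : ℂ) * z) * (starRingEnd ℂ) (H i j)
            * (starRingEnd ℂ) (v i - (a i : ℂ) * z) := by
      rw [hSdef, map_sum, Finset.sum_comm]
      refine Finset.sum_congr rfl fun i _ => ?_
      rw [map_sum]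
      refine Finset.sum_congr rfl fun j _ => ?_
      simp [hsymm i j]
    rw [hconj, hSdef, hTdef, ← Finset.sum_sub_distrib, Finset.mul_sum]
    refine Finset.sum_congr rfl fun i _ => ?_
    rw [← Finset.sum_sub_distrib, Finset.mul_sum]
    refine Finset.sum_congr rfl fun j _ => ?_
    have h2 : H i j - (starRingEnd ℂ) (H i j) = ((2 * (H i j).im : ℝ) : ℂ) * Complex.I :=
      Complex.sub_conj _
    have h3 : (starRingEnd ℂ) (v i - (a i : ℂ) * z) * H i j * (v j - (a j : ℂ) * z)
        - (v j - (a j : ℂ) * z) * (starRingEnd ℂ) (H i j) * (starRingEnd ℂ) (v i - (a i : ℂ) * z)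
        = (H i j - (starRingEnd ℂ) (H i j))
          * ((starRingEnd ℂ) (v i - (a i : ℂ) * z) * (v j - (a j : ℂ) * z)) := by ring
    rw [h3, h2]
    push_cast
    ring
  -- Step 5: first conjunct
  have hQim : ((Q.im : ℝ) : ℂ) = T := by
    have h1 : Q - (starRingEnd ℂ) Q = 2 * Complex.I * T := by
      rw [hQSR, map_add, hR]
      rw [show S + R - ((starRingEnd ℂ) S + R) = S - (starRingEnd ℂ) S by ring, hSS]
    have h2 : Q - (starRingEnd ℂ) Q = ((2 * Q.im : ℝ) : ℂ) * Complex.I := Complex.sub_conj Q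
    have h3 : 2 * Complex.I * ((Q.im : ℝ) : ℂ) = 2 * Complex.I * T := by
      rw [← h1, h2]; push_cast; ring
    exact mul_left_cancel₀ (by simp [Complex.I_ne_zero] : (2 : ℂ) * Complex.I ≠ 0) h3
  refine ⟨hQim, fun hpos him => ?_⟩
  -- Second conjunct
  have hT0 : T = 0 := by rw [← hQim, him]; simp
  set u : Fin n → ℂ := fun i => v i - (a i : ℂ) * z with hu
  set p : Fin n → ℝ := fun i => (u i).re with hp
  set q : Fin n → ℝ := fun i => (u i).im with hq
  have hre : (∑ i, ∑ j, (H i j).im * (p i * p j))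
      + (∑ i, ∑ j, (H i j).im * (q i * q j)) = 0 := by
    have := congrArg Complex.re hT0
    rw [hTdef] at this
    simp only [Complex.re_sum, Complex.zero_re] at this
    rw [← Finset.sum_add_distrib, ← this]
    refine Finset.sum_congr rfl fun i _ => ?_
    rw [← Finset.sum_add_distrib]
    refine Finset.sum_congr rfl fun j _ => ?_
    simp [Complex.mul_re, Complex.mul_im, hp, hq, hu]
    ring
  set M : Matrix (Fin n) (Fin n) ℝ := Matrix.of fun i j => (H i j).im with hM
  have hquad : ∀ x : Fin n → ℝ, x ⬝ᵥ M.mulVec x = ∑ i, ∑ j, (H i j).im * (x i * x j) := by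
    intro x
    simp only [dotProduct, mulVec, hM, Finset.mul_sum]
    refine Finset.sum_congr rfl fun i _ => Finset.sum_congr rfl fun j _ => by
      simp [Matrix.of_apply]; ring
  have hzero : ∀ x : Fin n → ℝ, x ⬝ᵥ M.mulVec x = 0 → x = 0 := by
    intro x hx
    by_contra hne
    have := hpos.dotProduct_mulVec_pos hne
    rw [show star x = x from star_trivial x, hx] at this
    exact lt_irrefl 0 this
  have hpq : p ⬝ᵥ M.mulVec p = 0 ∧ q ⬝ᵥ M.mulVec q = 0 := by
    have h1 : 0 ≤ p ⬝ᵥ M.mulVec p := by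
      have := hpos.posSemidef.dotProduct_mulVec_nonneg p; rwa [show star p = p from star_trivial p] at this
    have h2 : 0 ≤ q ⬝ᵥ M.mulVec q := by
      have := hpos.posSemidef.dotProduct_mulVec_nonneg q; rwa [show star q = q from star_trivial q] at this
    have h3 : p ⬝ᵥ M.mulVec p + q ⬝ᵥ M.mulVec q = 0 := by
      rw [hquad p, hquad q]; exact hre
    constructor <;> linarith
  have hp0 : p = 0 := hzero p hpq.1
  have hq0 : q = 0 := hzero q hpq.2
  intro i
  have : u i = 0 := by
    apply Complex.ext
    · simpa using congrFun hp0 i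
    · simpa using congrFun hq0 i
  have := sub_eq_zero.mp this
  simpa [hu] using this
end

section
/- Let n ≥ 1 and let B, C : ℝ → Mₙ(ℝ) with C(s) symmetric for every s. Let R, I : ℝ → Mₙ(ℝ) with R(s) and I(s) symmetric and I(s) invertible for every s, and let I be differentiable and satisfy I′(s) + I(s)C(s)R(s) + R(s)C(s)I(s) + B(s)I(s) + I(s)B(s)ᵀ = 0 for all s. Let ρ : ℝ → ℂⁿ be differentiable with ρ′(s) = −((R(s) + i·I(s))C(s) + B(s))·ρ(s) for all s. Then the function s ↦ (I(s)⁻¹·ρ(s)) · conj(ρ(s)) = Σⱼ (I(s)⁻¹ρ(s))ⱼ · conj(ρ(s)ⱼ) is constant on ℝ. (This is the constancy of the quantity f(s) in Step 8 of the quasimode construction, which yields det M(s) = α₀ det(Im H(s)).) -/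
open Matrix Filter Topology

lemma inv_entry_hasDerivAt {n : ℕ} (I I' : ℝ → Matrix (Fin n) (Fin n) ℝ)
    (hIinv : ∀ s, IsUnit (I s))
    (hI : ∀ s, ∀ i j, HasDerivAt (fun t => I t i j) (I' s i j) s) (s : ℝ) (i j : Fin n) :
    HasDerivAt (fun t => (I t)⁻¹ i j) ((-((I s)⁻¹ * I' s * (I s)⁻¹)) i j) s := by
  have hdet : ∀ t, IsUnit (I t).det := fun t => (Matrix.isUnit_iff_isUnit_det _).1 (hIinv t)
  have hIc : ContinuousAt I s :=
    continuousAt_pi.2 fun k => continuousAt_pi.2 fun l => (hI s k l).continuousAt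
  have hRinv : ContinuousAt (Ring.inverse : ℝ → ℝ) ((I s).det) := by
    have := NormedRing.inverse_continuousAt (hdet s).unit
    rwa [IsUnit.unit_spec] at this
  have hJc : ContinuousAt (fun t => (I t)⁻¹) s :=
    ContinuousAt.comp (continuousAt_matrix_inv (I s) hRinv) hIc
  have hJentry : ∀ k l : Fin n, Tendsto (fun t => (I t)⁻¹ k l) (𝓝 s) (𝓝 ((I s)⁻¹ k l)) := by
    intro k l
    exact ((continuous_apply l).continuousAt.comp ((continuous_apply k).continuousAt.comp hJc))
  rw [hasDerivAt_iff_tendsto_slope]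
  have hlim : Tendsto
      (fun t => ∑ k, ∑ l, (I t)⁻¹ i k * (-(slope (fun u => I u k l) s t)) * (I s)⁻¹ l j)
      (𝓝[≠] s) (𝓝 (∑ k, ∑ l, (I s)⁻¹ i k * (-(I' s k l)) * (I s)⁻¹ l j)) := by
    refine tendsto_finset_sum _ fun k _ => tendsto_finset_sum _ fun l _ => ?_
    exact ((((hJentry i k).mono_left nhdsWithin_le_nhds).mul
      (hasDerivAt_iff_tendsto_slope.1 (hI s k l)).neg).mul tendsto_const_nhds)
  have hval : (∑ k, ∑ l, (I s)⁻¹ i k * (-(I' s k l)) * (I s)⁻¹ l j)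
      = (-((I s)⁻¹ * I' s * (I s)⁻¹)) i j := by
    simp only [Matrix.neg_apply, Matrix.mul_apply, Finset.sum_mul, ← Finset.sum_neg_distrib]
    rw [Finset.sum_comm]
    exact Finset.sum_congr rfl fun k _ => Finset.sum_congr rfl fun l _ => by ring
  rw [hval] at hlim
  refine hlim.congr' ?_
  filter_upwards [self_mem_nhdsWithin] with t ht
  have hM : (I t)⁻¹ - (I s)⁻¹ = (I t)⁻¹ * (I s - I t) * (I s)⁻¹ := by
    rw [Matrix.mul_sub, Matrix.sub_mul, Matrix.mul_assoc,
      Matrix.mul_nonsing_inv _ (hdet s), Matrix.nonsing_inv_mul _ (hdet t), mul_one, one_mul]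
  have hentry : (I t)⁻¹ i j - (I s)⁻¹ i j = ((I t)⁻¹ * (I s - I t) * (I s)⁻¹) i j := by
    rw [← hM]; simp [Matrix.sub_apply]
  rw [slope_def_field, hentry]
  simp only [Matrix.mul_apply, Matrix.sub_apply, Finset.sum_mul, Finset.sum_div,
    slope_def_field]
  rw [Finset.sum_comm]
  exact Finset.sum_congr rfl fun k _ => Finset.sum_congr rfl fun l _ => by ring

lemma key_alg {n : ℕ} (Kc Jc Rc Cc Bc : Matrix (Fin n) (Fin n) ℂ)
    (hJK : Jc * Kc = 1) (hKJ : Kc * Jc = 1)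
    (hR : Rcᵀ = Rc) (hC : Ccᵀ = Cc) (hK : Kcᵀ = Kc) :
    -(Jc * (-(Kc * Cc * Rc + Rc * Cc * Kc + Bc * Kc + Kc * Bcᵀ)) * Jc)
      - Jc * ((Rc + Complex.I • Kc) * Cc + Bc)
      - ((Rc - Complex.I • Kc) * Cc + Bc)ᵀ * Jc = 0 := by
  have h1 : ∀ X : Matrix (Fin n) (Fin n) ℂ, Jc * (Kc * X) = X := fun X => by
    rw [← Matrix.mul_assoc, hJK, one_mul]
  simp only [transpose_add, transpose_sub, transpose_mul, transpose_smul, hR, hC, hK,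
    mul_add, add_mul, mul_sub, sub_mul, neg_add, neg_neg, neg_mul, mul_neg, Matrix.mul_smul,
    Matrix.smul_mul, Matrix.mul_assoc, h1, hKJ, hJK, mul_one, one_mul]
  abel

/-- Constancy of `f(s) = (I(s)⁻¹ρ(s))·conj(ρ(s))` (Step 8 of the
quasimode construction): if `I` is symmetric, invertible, and satisfies
`I′ + ICR + RCI + BI + IBᵀ = 0`, and `ρ′ = −((R + iI)C + B)ρ`, then
`s ↦ (I(s)⁻¹·ρ(s)) · conj(ρ(s))` is constant on `ℝ`. -/
theorem riccati_quantity_constant (n : ℕ) (hn : 1 ≤ n)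
    (B C R : ℝ → Matrix (Fin n) (Fin n) ℝ)
    (hCsymm : ∀ s, (C s).IsSymm)
    (I I' : ℝ → Matrix (Fin n) (Fin n) ℝ)
    (hRsymm : ∀ s, (R s).IsSymm) (hIsymm : ∀ s, (I s).IsSymm)
    (hIinv : ∀ s, IsUnit (I s))
    (hI : ∀ s, ∀ i j, HasDerivAt (fun t => I t i j) (I' s i j) s)
    (hODE : ∀ s, I' s + I s * C s * R s + R s * C s * I s + B s * I s + I s * (B s)ᵀ = 0)
    (ρ : ℝ → Fin n → ℂ)
    (hρ : ∀ s, HasDerivAt ρ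
      (-(((((R s).map (Complex.ofReal)) + Complex.I • ((I s).map (Complex.ofReal)))
            * ((C s).map (Complex.ofReal))
          + ((B s).map (Complex.ofReal))).mulVec (ρ s))) s) :
    ∀ s t : ℝ,
      (((I s)⁻¹.map (Complex.ofReal)).mulVec (ρ s)) ⬝ᵥ (fun i => (starRingEnd ℂ) (ρ s i))
        = (((I t)⁻¹.map (Complex.ofReal)).mulVec (ρ t)) ⬝ᵥ (fun i => (starRingEnd ℂ) (ρ t i)) := by
  classical
  have hdet : ∀ t, IsUnit (I t).det := fun t => (Matrix.isUnit_iff_isUnit_det _).1 (hIinv t)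
  -- map helpers
  have mapMul : ∀ (M N : Matrix (Fin n) (Fin n) ℝ),
      (M * N).map (Complex.ofReal) = M.map Complex.ofReal * N.map Complex.ofReal := by
    intro M N; ext i j
    simp [Matrix.mul_apply, Matrix.map_apply]
  have mapAdd : ∀ (M N : Matrix (Fin n) (Fin n) ℝ),
      (M + N).map (Complex.ofReal) = M.map Complex.ofReal + N.map Complex.ofReal := by
    intro M N; ext i j; simp [Matrix.map_apply]
  have mapNeg : ∀ (M : Matrix (Fin n) (Fin n) ℝ),
      (-M).map (Complex.ofReal) = -(M.map Complex.ofReal) := by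
    intro M; ext i j; simp [Matrix.map_apply]
  have mapT : ∀ (M : Matrix (Fin n) (Fin n) ℝ),
      (Mᵀ).map (Complex.ofReal) = (M.map Complex.ofReal)ᵀ := by
    intro M; ext i j; simp [Matrix.map_apply]
  have mapOne : ((1 : Matrix (Fin n) (Fin n) ℝ)).map (Complex.ofReal)
      = (1 : Matrix (Fin n) (Fin n) ℂ) := by
    ext i j; by_cases h : i = j <;> simp [Matrix.map_apply, Matrix.one_apply, h]
  set f : ℝ → ℂ := fun u =>
    (((I u)⁻¹.map (Complex.ofReal)).mulVec (ρ u)) ⬝ᵥ (fun i => (starRingEnd ℂ) (ρ u i)) with hf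
  have key : ∀ s : ℝ, HasDerivAt f 0 s := by
    intro s
    set Jm : Matrix (Fin n) (Fin n) ℝ := (I s)⁻¹ with hJmdef
    set Dm : Matrix (Fin n) (Fin n) ℝ := -(Jm * I' s * Jm) with hDmdef
    set Kc : Matrix (Fin n) (Fin n) ℂ := (I s).map Complex.ofReal with hKcdef
    set Rc : Matrix (Fin n) (Fin n) ℂ := (R s).map Complex.ofReal with hRcdef
    set Cc : Matrix (Fin n) (Fin n) ℂ := (C s).map Complex.ofReal with hCcdef
    set Bc : Matrix (Fin n) (Fin n) ℂ := (B s).map Complex.ofReal with hBcdef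
    set Jc : Matrix (Fin n) (Fin n) ℂ := Jm.map Complex.ofReal with hJcdef
    set Dc : Matrix (Fin n) (Fin n) ℂ := Dm.map Complex.ofReal with hDcdef
    set Mc : Matrix (Fin n) (Fin n) ℂ := (Rc + Complex.I • Kc) * Cc + Bc with hMcdef
    set Nc : Matrix (Fin n) (Fin n) ℂ := (Rc - Complex.I • Kc) * Cc + Bc with hNcdef
    set P : Fin n → ℂ := -(Mc.mulVec (ρ s)) with hPdef
    set σ : Fin n → ℂ := fun i => (starRingEnd ℂ) (ρ s i) with hσdef
    -- derivative components
    have hρi : ∀ i, HasDerivAt (fun u => ρ u i) (P i) s := fun i => hasDerivAt_pi.1 (hρ s) i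
    have hσi : ∀ i, HasDerivAt (fun u => (starRingEnd ℂ) (ρ u i)) ((starRingEnd ℂ) (P i)) s := by
      intro i
      have := Complex.conjCLE.toContinuousLinearMap.hasFDerivAt.comp_hasDerivAt s (hρi i)
      simpa [Function.comp_def] using this
    have hJij : ∀ i j, HasDerivAt (fun u => (((I u)⁻¹ i j : ℝ) : ℂ)) ((Dm i j : ℂ)) s := by
      intro i j
      have := Complex.ofRealCLM.hasFDerivAt.comp_hasDerivAt s
        (inv_entry_hasDerivAt I I' hIinv hI s i j)
      simpa [Function.comp_def, hDmdef, Matrix.neg_apply] using this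
    set E : ℂ := ∑ i, ((∑ j, ((Dm i j : ℂ) * ρ s j + ((Jm i j : ℝ) : ℂ) * P j)) * σ i
        + (∑ j, ((Jm i j : ℝ) : ℂ) * ρ s j) * (starRingEnd ℂ) (P i)) with hEdef
    have hder : HasDerivAt f E s := by
      have heq : f = fun u => ∑ i, (∑ j, (((I u)⁻¹ i j : ℝ) : ℂ) * ρ u j)
          * (starRingEnd ℂ) (ρ u i) := by
        funext u
        simp [hf, Matrix.mulVec, dotProduct, Matrix.map_apply]
      rw [heq, hEdef]
      refine HasDerivAt.fun_sum fun i _ => ?_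
      exact (HasDerivAt.fun_sum fun j _ => (hJij i j).mul (hρi j)).mul (hσi i)
    -- now show E = 0
    -- conjugate of P
    have hσ' : (fun i => (starRingEnd ℂ) (P i)) = -(Nc.mulVec σ) := by
      funext i
      simp only [hPdef, Pi.neg_apply, Matrix.mulVec, dotProduct, map_neg, map_sum]
      refine congrArg Neg.neg (Finset.sum_congr rfl fun x _ => ?_)
      simp only [hMcdef, hNcdef, hσdef, Matrix.add_apply, Matrix.mul_apply, Matrix.smul_apply,
        Matrix.sub_apply, Matrix.map_apply, hKcdef, hRcdef, hCcdef, hBcdef, smul_eq_mul,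
        map_add, _root_.map_mul, map_sum, Complex.conj_ofReal, Complex.conj_I,
        Finset.sum_mul, add_mul, sub_mul, neg_mul]
      rw [sub_eq_add_neg, ← Finset.sum_neg_distrib]
    -- E in matrix form
    have hEmat : E = (Dc.mulVec (ρ s)) ⬝ᵥ σ + (Jc.mulVec P) ⬝ᵥ σ
        + (Jc.mulVec (ρ s)) ⬝ᵥ (fun i => (starRingEnd ℂ) (P i)) := by
      simp only [hEdef, Matrix.mulVec, dotProduct, Matrix.map_apply, hDcdef, hJcdef,
        add_mul, Finset.sum_add_distrib]
    rw [hσ'] at hEmat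
    -- matrix identity
    have hJK : Jc * Kc = 1 := by
      rw [hJcdef, hKcdef, ← mapMul, hJmdef, Matrix.nonsing_inv_mul _ (hdet s), mapOne]
    have hKJ : Kc * Jc = 1 := by
      rw [hJcdef, hKcdef, ← mapMul, hJmdef, Matrix.mul_nonsing_inv _ (hdet s), mapOne]
    have hRsym : Rcᵀ = Rc := by rw [hRcdef, ← mapT, (hRsymm s)]
    have hCsym : Ccᵀ = Cc := by rw [hCcdef, ← mapT, (hCsymm s)]
    have hKsym : Kcᵀ = Kc := by rw [hKcdef, ← mapT, (hIsymm s)]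
    have hODEc : (I' s).map Complex.ofReal
        = -(Kc * Cc * Rc + Rc * Cc * Kc + Bc * Kc + Kc * Bcᵀ) := by
      have h := hODE s
      rw [add_assoc, add_assoc, add_assoc] at h
      have h2 : I' s = -(I s * C s * R s + (R s * C s * I s + (B s * I s + I s * (B s)ᵀ))) :=
        eq_neg_of_add_eq_zero_left h
      rw [h2]
      simp only [mapNeg, mapAdd, mapMul, mapT, ← hKcdef, ← hRcdef, ← hCcdef, ← hBcdef]
      abel
    have hDcval : Dc = -(Jc * ((I' s).map Complex.ofReal) * Jc) := by
      rw [hDcdef, hDmdef, mapNeg, mapMul, mapMul, hJcdef]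
    have hzero : Dc - Jc * Mc - Ncᵀ * Jc = 0 := by
      rw [hDcval, hODEc, hMcdef, hNcdef]
      exact key_alg Kc Jc Rc Cc Bc hJK hKJ hRsym hCsym hKsym
    -- combine
    have hD2 : Dc = Jc * Mc + Ncᵀ * Jc := by rwa [sub_sub, sub_eq_zero] at hzero
    have hE0 : E = 0 := by
      rw [hEmat, hPdef, Matrix.mulVec_neg, Matrix.mulVec_mulVec, neg_dotProduct,
        dotProduct_neg, Matrix.dotProduct_mulVec, ← Matrix.mulVec_transpose,
        Matrix.mulVec_mulVec, hD2, Matrix.add_mulVec, add_dotProduct]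
      ring
    rw [← hE0]
    exact hder
  have hdiff : Differentiable ℝ f := fun u => (key u).differentiableAt
  have hderiv : ∀ u, deriv f u = 0 := fun u => (key u).deriv
  intro s t
  exact is_const_of_deriv_eq_zero hdiff hderiv s t
end

section
/- Let n ≥ 1 and let B, C, D : ℝ → Mₙ(ℝ) with C(s) symmetric for every s. Let H : ℝ → Mₙ(ℂ) be differentiable, with H(s) symmetric and Im H(s) positive definite for every s, with H(0) = i·Idₙ, and satisfying the matrix Riccati equation H′(s) + H(s)C(s)H(s) + B(s)H(s) + H(s)B(s)ᵀ + D(s) = 0 for all s. Let x, ξ : ℝ → ℝⁿ be twice differentiable with x″ = Bᵀx′ + Cξ′ and ξ″ = −Dx′ − Bξ′ on ℝ. For s ∈ ℝ define the (n+1)×(n+1) complex block matrix M(s) = [[2i·Im H(s), ξ′(s) − H(s)·x′(s)], [(ξ′(s) − H(s)·x′(s))ᵀ, (H(s)·x′(s) − ξ′(s))·x′(s)]]. Then for every s ∈ ℝ, det M(s) = (i/2)·(2i)ⁿ·(‖x′(0)‖² + ‖ξ′(0)‖²)·det(Im H(s)), where ‖·‖ is the Euclidean norm on ℝⁿ and det(Im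 H(s)) is regarded as a complex number. In particular, if (x′(0), ξ′(0)) ≠ (0,0) then M(s) is invertible for every s. -/
open Matrix Complex


namespace DetMAux

variable {n : ℕ}

/-- Complexification of a real matrix. -/
def cplx (M : Matrix (Fin n) (Fin n) ℝ) : Matrix (Fin n) (Fin n) ℂ :=
  M.map Complex.ofReal

/-- Complexification of a real vector. -/
def cvec (v : Fin n → ℝ) : Fin n → ℂ := fun i => (v i : ℂ)

/-- Entrywise imaginary part, as a complex matrix. -/
noncomputable def imM (M : Matrix (Fin n) (Fin n) ℂ) : Matrix (Fin n) (Fin n) ℂ :=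
  Matrix.of fun i j => ((M i j).im : ℂ)

/-- Entrywise conjugate matrix. -/
noncomputable def conjM (M : Matrix (Fin n) (Fin n) ℂ) : Matrix (Fin n) (Fin n) ℂ :=
  M.map (starRingEnd ℂ)

/-- The vector `u(s) = ξ'(s) - H(s)x'(s)` (complexified). -/
noncomputable def uF (H : ℝ → Matrix (Fin n) (Fin n) ℂ) (x' ξ' : ℝ → Fin n → ℝ) (t : ℝ) : Fin n → ℂ :=
  cvec (ξ' t) - H t *ᵥ cvec (x' t)

/-- The conserved quantity. -/
noncomputable def EF (H : ℝ → Matrix (Fin n) (Fin n) ℂ) (x' ξ' : ℝ → Fin n → ℝ) (t : ℝ) : ℂ :=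
  -(uF H x' ξ' t ⬝ᵥ cvec (x' t))
    + Complex.I/2 * (uF H x' ξ' t ⬝ᵥ (imM (H t))⁻¹ *ᵥ uF H x' ξ' t)

theorem cvec_add (v w : Fin n → ℝ) : cvec (v + w) = cvec v + cvec w := by
  funext i; simp [cvec]

theorem cvec_sub (v w : Fin n → ℝ) : cvec (v - w) = cvec v - cvec w := by
  funext i; simp [cvec]

theorem cvec_neg (v : Fin n → ℝ) : cvec (-v) = -cvec v := by
  funext i; simp [cvec]

theorem cvec_mulVec (M : Matrix (Fin n) (Fin n) ℝ) (v : Fin n → ℝ) :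
    cvec (M *ᵥ v) = cplx M *ᵥ cvec v := by
  funext i
  simp [cvec, cplx, Matrix.mulVec, dotProduct, Matrix.map_apply]

theorem cplx_transpose (M : Matrix (Fin n) (Fin n) ℝ) : cplx (Mᵀ) = (cplx M)ᵀ := by
  ext i j; simp [cplx, Matrix.map_apply]

theorem conjM_mul (M N : Matrix (Fin n) (Fin n) ℂ) :
    conjM (M * N) = conjM M * conjM N := by
  ext i j
  simp [conjM, Matrix.map_apply, Matrix.mul_apply, map_sum]

theorem conjM_add (M N : Matrix (Fin n) (Fin n) ℂ) : conjM (M + N) = conjM M + conjM N := by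
  ext i j; simp [conjM, Matrix.map_apply]

theorem conjM_neg (M : Matrix (Fin n) (Fin n) ℂ) : conjM (-M) = -conjM M := by
  ext i j; simp [conjM, Matrix.map_apply]

theorem conjM_cplx (M : Matrix (Fin n) (Fin n) ℝ) : conjM (cplx M) = cplx M := by
  ext i j; simp [conjM, cplx, Matrix.map_apply, Complex.conj_ofReal]

theorem conjM_transpose (M : Matrix (Fin n) (Fin n) ℂ) : conjM (Mᵀ) = (conjM M)ᵀ := by
  ext i j; simp [conjM, Matrix.map_apply]

/-- `H - H̄ = 2i·Im H`. -/
theorem sub_conjM (M : Matrix (Fin n) (Fin n) ℂ) :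
    M - conjM M = (2 * Complex.I) • imM M := by
  ext i j
  simp only [Matrix.sub_apply, conjM, Matrix.map_apply, Matrix.smul_apply, imM, Matrix.of_apply,
    smul_eq_mul]
  rw [Complex.sub_conj]
  push_cast
  ring


theorem mulVec_dot (M : Matrix (Fin n) (Fin n) ℂ) (v w : Fin n → ℂ) :
    (M *ᵥ v) ⬝ᵥ w = v ⬝ᵥ (Mᵀ *ᵥ w) := by
  rw [dotProduct_comm, dotProduct_mulVec, dotProduct_comm, Matrix.mulVec_transpose]

section Algebra

variable {n : ℕ}

theorem Gunit' (Hm : Matrix (Fin n) (Fin n) ℂ)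
    (hpos : (Matrix.of fun i j => (Hm i j).im : Matrix (Fin n) (Fin n) ℝ).PosDef) :
    IsUnit (imM Hm).det := by
  rw [isUnit_iff_ne_zero]
  have hmap : imM Hm
      = (Matrix.of fun i j => (Hm i j).im : Matrix (Fin n) (Fin n) ℝ).map Complex.ofRealHom := by
    ext i j; rfl
  rw [hmap]
  rw [show ((Matrix.of fun i j => (Hm i j).im : Matrix (Fin n) (Fin n) ℝ)).map ⇑Complex.ofRealHom
      = Complex.ofRealHom.mapMatrix (Matrix.of fun i j => (Hm i j).im : Matrix (Fin n) (Fin n) ℝ)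
      from rfl, ← RingHom.map_det]
  simpa using ne_of_gt hpos.det_pos

theorem u_deriv_eq (Hm H'm : Matrix (Fin n) (Fin n) ℂ) (Bm Cm Dm : Matrix (Fin n) (Fin n) ℝ)
    (cx cξ cxd cξd : Fin n → ℝ)
    (hR : H'm + Hm * cplx Cm * Hm + cplx Bm * Hm + Hm * (cplx Bm)ᵀ + cplx Dm = 0)
    (hx : cxd = Bmᵀ *ᵥ cx + Cm *ᵥ cξ) (hξ : cξd = -(Dm *ᵥ cx) - Bm *ᵥ cξ) :
    cvec cξd - (H'm *ᵥ cvec cx + Hm *ᵥ cvec cxd)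
      = -((cplx Bm + Hm * cplx Cm) *ᵥ (cvec cξ - Hm *ᵥ cvec cx)) := by
  have hH' : H'm = -(Hm * cplx Cm * Hm + (cplx Bm * Hm + (Hm * (cplx Bm)ᵀ + cplx Dm))) := by
    have h := hR; simp only [add_assoc] at h; exact eq_neg_of_add_eq_zero_left h
  rw [hx, hξ, hH', cvec_sub, cvec_neg, cvec_mulVec, cvec_mulVec, cvec_add, cvec_mulVec,
    cvec_mulVec, cplx_transpose]
  simp only [Matrix.add_mulVec, Matrix.neg_mulVec, Matrix.mulVec_add, Matrix.mulVec_sub,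
    Matrix.mulVec_neg, ← Matrix.mulVec_mulVec]
  abel

theorem G_deriv_eq (Hm H'm : Matrix (Fin n) (Fin n) ℂ) (Bm Cm Dm : Matrix (Fin n) (Fin n) ℝ)
    (hR : H'm + Hm * cplx Cm * Hm + cplx Bm * Hm + Hm * (cplx Bm)ᵀ + cplx Dm = 0) :
    imM H'm = -((Hm * cplx Cm + cplx Bm) * imM Hm
      + imM Hm * (cplx Cm * conjM Hm + (cplx Bm)ᵀ)) := by
  have hH' : H'm = -(Hm * cplx Cm * Hm + (cplx Bm * Hm + (Hm * (cplx Bm)ᵀ + cplx Dm))) := by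
    have h := hR; simp only [add_assoc] at h; exact eq_neg_of_add_eq_zero_left h
  have hK' : conjM H'm = -(conjM Hm * cplx Cm * conjM Hm + (cplx Bm * conjM Hm
      + (conjM Hm * (cplx Bm)ᵀ + cplx Dm))) := by
    rw [hH', conjM_neg, conjM_add, conjM_add, conjM_add, conjM_mul, conjM_mul, conjM_mul,
      conjM_mul, conjM_cplx, conjM_transpose, conjM_cplx, conjM_cplx]
  have h3 : H'm - conjM H'm
      = -((Hm * cplx Cm + cplx Bm) * (Hm - conjM Hm)
        + (Hm - conjM Hm) * (cplx Cm * conjM Hm + (cplx Bm)ᵀ)) := by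
    rw [hK', hH']; noncomm_ring
  rw [sub_conjM Hm, sub_conjM H'm] at h3
  have h4 : (2*Complex.I) • imM H'm
      = (2*Complex.I) • (-((Hm * cplx Cm + cplx Bm) * imM Hm
        + imM Hm * (cplx Cm * conjM Hm + (cplx Bm)ᵀ))) := by
    rw [h3, Matrix.mul_smul, Matrix.smul_mul, ← smul_add, ← smul_neg]
  ext i j
  have h5 := congrFun (congrFun h4 i) j
  simp only [Matrix.smul_apply, smul_eq_mul] at h5
  exact mul_left_cancel₀ (by simp [Complex.ext_iff] : (2*Complex.I : ℂ) ≠ 0) h5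

theorem Evalue_zero (Hm H'm : Matrix (Fin n) (Fin n) ℂ) (Bm Cm Dm : Matrix (Fin n) (Fin n) ℝ)
    (xv ξv xdv : Fin n → ℝ) (u U : Fin n → ℂ) (Gi : Matrix (Fin n) (Fin n) ℂ)
    (hu : u = cvec ξv - Hm *ᵥ cvec xv)
    (hU : U = -((cplx Bm + Hm * cplx Cm) *ᵥ u))
    (hGi : Gi = (imM Hm)⁻¹)
    (hR : H'm + Hm * cplx Cm * Hm + cplx Bm * Hm + Hm * (cplx Bm)ᵀ + cplx Dm = 0)
    (hHs : Hmᵀ = Hm) (hCs : Cmᵀ = Cm)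
    (hdet : IsUnit (imM Hm).det)
    (hx : xdv = Bmᵀ *ᵥ xv + Cm *ᵥ ξv) :
    -(U ⬝ᵥ cvec xv + u ⬝ᵥ cvec xdv)
      + Complex.I/2 * (U ⬝ᵥ (Gi *ᵥ u)
        + u ⬝ᵥ ((-(Gi * imM H'm * Gi)) *ᵥ u + Gi *ᵥ U)) = 0 := by
  have hGGi : imM Hm * Gi = 1 := by rw [hGi]; exact Matrix.mul_nonsing_inv _ hdet
  have hGiG : Gi * imM Hm = 1 := by rw [hGi]; exact Matrix.nonsing_inv_mul _ hdet
  have hCs' : (cplx Cm)ᵀ = cplx Cm := by rw [← cplx_transpose, hCs]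
  have hPt : (cplx Bm + Hm * cplx Cm)ᵀ = (cplx Bm)ᵀ + cplx Cm * Hm := by
    rw [Matrix.transpose_add, Matrix.transpose_mul, hHs, hCs']
  -- first bracket
  have hB1 : U ⬝ᵥ cvec xv + u ⬝ᵥ cvec xdv = u ⬝ᵥ (cplx Cm *ᵥ u) := by
    rw [hU, hx, cvec_add, cvec_mulVec, cvec_mulVec, cplx_transpose,
      neg_dotProduct, mulVec_dot, hPt, Matrix.add_mulVec, dotProduct_add, dotProduct_add, hu,
      Matrix.mulVec_sub, dotProduct_sub, Matrix.mulVec_mulVec]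
    ring
  -- middle matrix identity
  have hmid : -(Gi * imM H'm * Gi)
      = Gi * (Hm * cplx Cm + cplx Bm) + (cplx Cm * conjM Hm + (cplx Bm)ᵀ) * Gi := by
    rw [G_deriv_eq Hm H'm Bm Cm Dm hR]
    have haux : Gi * -((Hm * cplx Cm + cplx Bm) * imM Hm
          + imM Hm * (cplx Cm * conjM Hm + (cplx Bm)ᵀ)) * Gi
        = -((Gi * (Hm * cplx Cm + cplx Bm)) * (imM Hm * Gi)
          + (Gi * imM Hm) * ((cplx Cm * conjM Hm + (cplx Bm)ᵀ) * Gi)) := by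
      noncomm_ring
    rw [haux, hGGi, hGiG, mul_one, one_mul, neg_neg]
  have hKH : (cplx Cm * conjM Hm + (cplx Bm)ᵀ) - (cplx Bm + Hm * cplx Cm)ᵀ
      = (-(2*Complex.I)) • (cplx Cm * imM Hm) := by
    rw [hPt]
    have h6 : (cplx Cm * conjM Hm + (cplx Bm)ᵀ) - ((cplx Bm)ᵀ + cplx Cm * Hm)
        = -(cplx Cm * (Hm - conjM Hm)) := by noncomm_ring
    rw [h6, sub_conjM, Matrix.mul_smul, ← neg_smul]
  -- second bracket pieces
  have e1 : U ⬝ᵥ (Gi *ᵥ u) = -(u ⬝ᵥ (((cplx Bm + Hm * cplx Cm)ᵀ * Gi) *ᵥ u)) := by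
    rw [hU, neg_dotProduct, mulVec_dot, Matrix.mulVec_mulVec]
  have e2 : u ⬝ᵥ (Gi *ᵥ U) = -(u ⬝ᵥ ((Gi * (cplx Bm + Hm * cplx Cm)) *ᵥ u)) := by
    rw [hU, Matrix.mulVec_neg, dotProduct_neg, Matrix.mulVec_mulVec]
  have e3 : u ⬝ᵥ ((-(Gi * imM H'm * Gi)) *ᵥ u)
      = u ⬝ᵥ ((Gi * (Hm * cplx Cm + cplx Bm)) *ᵥ u)
        + u ⬝ᵥ (((cplx Cm * conjM Hm + (cplx Bm)ᵀ) * Gi) *ᵥ u) := by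
    rw [hmid, Matrix.add_mulVec, dotProduct_add]
  have e4 : u ⬝ᵥ (((cplx Cm * conjM Hm + (cplx Bm)ᵀ) * Gi) *ᵥ u)
        - u ⬝ᵥ (((cplx Bm + Hm * cplx Cm)ᵀ * Gi) *ᵥ u)
      = (-(2*Complex.I)) * (u ⬝ᵥ (cplx Cm *ᵥ u)) := by
    rw [← dotProduct_sub, ← Matrix.sub_mulVec, ← Matrix.sub_mul, hKH, Matrix.smul_mul,
      Matrix.mul_assoc, hGGi, mul_one, Matrix.smul_mulVec, dotProduct_smul, smul_eq_mul]
  have e5 : Gi * (Hm * cplx Cm + cplx Bm) = Gi * (cplx Bm + Hm * cplx Cm) := by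
    rw [add_comm (Hm * cplx Cm)]
  have hB2 : U ⬝ᵥ (Gi *ᵥ u) + u ⬝ᵥ ((-(Gi * imM H'm * Gi)) *ᵥ u + Gi *ᵥ U)
      = (-(2*Complex.I)) * (u ⬝ᵥ (cplx Cm *ᵥ u)) := by
    rw [dotProduct_add, e1, e2, e3, e5]
    linear_combination e4
  rw [hB1, hB2]
  linear_combination (-(u ⬝ᵥ (cplx Cm *ᵥ u))) * Complex.I_sq

end Algebra

section WithInstances

attribute [local instance] Matrix.linftyOpNormedRing Matrix.linftyOpNormedAlgebra
  Matrix.linftyOpNormedAddCommGroup Matrix.linftyOpNormedSpace Matrix.linftyOpIsBoundedSMul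


variable {n : ℕ}

theorem hasDerivAt_matrix {A : ℝ → Matrix (Fin n) (Fin n) ℂ} {A' : Matrix (Fin n) (Fin n) ℂ}
    {s : ℝ} (h : ∀ i j, HasDerivAt (fun t => A t i j) (A' i j) s) : HasDerivAt A A' s := by
  have key : ∀ (M : Matrix (Fin n) (Fin n) ℂ),
      M = ∑ i, ∑ j, M i j • Matrix.single i j (1:ℂ) := by
    intro M
    exact (Matrix.matrix_eq_sum_single M).trans (by simp [Matrix.smul_single])
  have h2 : HasDerivAt (fun t => ∑ i, ∑ j, A t i j • Matrix.single i j (1:ℂ))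
      (∑ i, ∑ j, A' i j • Matrix.single i j (1:ℂ)) s := by
    apply HasDerivAt.fun_sum; intro i _; apply HasDerivAt.fun_sum; intro j _
    exact (h i j).smul_const _
  rw [← key] at h2
  convert h2 using 1
  funext t; exact key (A t)

theorem hasDerivAt_entry {A : ℝ → Matrix (Fin n) (Fin n) ℂ} {A' : Matrix (Fin n) (Fin n) ℂ}
    {s : ℝ} (h : HasDerivAt A A' s) (i j : Fin n) :
    HasDerivAt (fun t => A t i j) (A' i j) s := by
  let L : Matrix (Fin n) (Fin n) ℂ →ₗ[ℝ] ℂ :=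
    { toFun := fun M => M i j, map_add' := fun _ _ => rfl, map_smul' := fun _ _ => rfl }
  have hL := (LinearMap.toContinuousLinearMap L).hasFDerivAt (x := A s)
  exact (hL.comp_hasDerivAt s h : )

theorem hasDerivAt_inv {A : ℝ → Matrix (Fin n) (Fin n) ℂ} {A' : Matrix (Fin n) (Fin n) ℂ} {s : ℝ}
    (h : HasDerivAt A A' s) (hu : IsUnit (A s)) :
    HasDerivAt (fun t => (A t)⁻¹) (-((A s)⁻¹ * A' * (A s)⁻¹)) s := by
  obtain ⟨u, hu'⟩ := hu
  have h2 := (hasFDerivAt_ringInverse (𝕜 := ℝ) u)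
  rw [hu'] at h2
  have h3 := h2.comp_hasDerivAt s h
  have h4 : HasDerivAt (fun t => Ring.inverse (A t))
      (-(Ring.inverse (A s) * A' * Ring.inverse (A s))) s := by
    convert h3 using 1
    case e'_4 => rfl
    case e'_5 => rfl
    case e'_6 => rfl
    case e'_8 => rfl
    rw [← hu', Ring.inverse_unit]
    simp [ContinuousLinearMap.mulLeftRight]
  simpa only [Matrix.nonsing_inv_eq_ringInverse] using h4

theorem hasDerivAt_dot {f g : ℝ → Fin n → ℂ} {f' g' : Fin n → ℂ} {s : ℝ}
    (hf : ∀ i, HasDerivAt (fun t => f t i) (f' i) s)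
    (hg : ∀ i, HasDerivAt (fun t => g t i) (g' i) s) :
    HasDerivAt (fun t => f t ⬝ᵥ g t) (f' ⬝ᵥ g s + f s ⬝ᵥ g') s := by
  have h2 : HasDerivAt (fun t => ∑ i, f t i * g t i)
      (∑ i, (f' i * g s i + f s i * g' i)) s := by
    apply HasDerivAt.fun_sum; intro i _; exact (hf i).mul (hg i)
  simpa [dotProduct, Finset.sum_add_distrib] using h2

theorem hasDerivAt_mulVec {A : ℝ → Matrix (Fin n) (Fin n) ℂ} {A' : Matrix (Fin n) (Fin n) ℂ}
    {v : ℝ → Fin n → ℂ} {v' : Fin n → ℂ} {s : ℝ}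
    (hA : ∀ i j, HasDerivAt (fun t => A t i j) (A' i j) s)
    (hv : ∀ i, HasDerivAt (fun t => v t i) (v' i) s) (i : Fin n) :
    HasDerivAt (fun t => (A t *ᵥ v t) i) ((A' *ᵥ v s + A s *ᵥ v') i) s := by
  have h2 : HasDerivAt (fun t => ∑ j, A t i j * v t j)
      (∑ j, (A' i j * v s j + A s i j * v' j)) s := by
    apply HasDerivAt.fun_sum; intro j _; exact (hA i j).mul (hv j)
  simpa [Matrix.mulVec, dotProduct, Finset.sum_add_distrib] using h2


theorem Gunit {m : ℕ} (Hm : Matrix (Fin m) (Fin m) ℂ)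
    (hpos : (Matrix.of fun i j => (Hm i j).im : Matrix (Fin m) (Fin m) ℝ).PosDef) :
    IsUnit (Matrix.of (fun i j => ((Hm i j).im : ℂ)) : Matrix (Fin m) (Fin m) ℂ) := by
  rw [Matrix.isUnit_iff_isUnit_det, isUnit_iff_ne_zero]
  have hmap : (Matrix.of (fun i j => ((Hm i j).im : ℂ)) : Matrix (Fin m) (Fin m) ℂ)
      = (Matrix.of fun i j => (Hm i j).im : Matrix (Fin m) (Fin m) ℝ).map Complex.ofRealHom := by
    ext i j; rfl
  rw [hmap]
  rw [show ((of fun i j => (Hm i j).im : Matrix (Fin m) (Fin m) ℝ)).map ⇑Complex.ofRealHom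
      = Complex.ofRealHom.mapMatrix (of fun i j => (Hm i j).im : Matrix (Fin m) (Fin m) ℝ) from rfl,
    ← RingHom.map_det]
  simpa using ne_of_gt hpos.det_pos

section Analytic

variable {n : ℕ}

theorem hasDerivAt_cvec {v w : ℝ → Fin n → ℝ} {t : ℝ} (hv : HasDerivAt v (w t) t) (i : Fin n) :
    HasDerivAt (fun r => cvec (v r) i) (cvec (w t) i) t := by
  have h1 := (hasDerivAt_pi.1 hv) i
  exact Complex.ofRealCLM.hasFDerivAt.comp_hasDerivAt t h1

theorem hasDerivAt_uF {H H' : ℝ → Matrix (Fin n) (Fin n) ℂ} {x' ξ' x'' ξ'' : ℝ → Fin n → ℝ}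
    {t : ℝ} (hHd : ∀ i j, HasDerivAt (fun r => H r i j) (H' t i j) t)
    (hxd : HasDerivAt x' (x'' t) t) (hξd : HasDerivAt ξ' (ξ'' t) t) (i : Fin n) :
    HasDerivAt (fun r => uF H x' ξ' r i)
      ((cvec (ξ'' t) - (H' t *ᵥ cvec (x' t) + H t *ᵥ cvec (x'' t))) i) t := by
  have h1 := hasDerivAt_cvec hξd i
  have h2 := hasDerivAt_mulVec hHd (hasDerivAt_cvec hxd) i
  have h3 := h1.fun_sub h2
  simpa [uF] using h3

theorem hasDerivAt_imM {H H' : ℝ → Matrix (Fin n) (Fin n) ℂ} {t : ℝ}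
    (hHd : ∀ i j, HasDerivAt (fun r => H r i j) (H' t i j) t) :
    HasDerivAt (fun r => imM (H r)) (imM (H' t)) t := by
  apply hasDerivAt_matrix
  intro i j
  have h1 := hHd i j
  have h2 := (Complex.ofRealCLM.comp Complex.imCLM).hasFDerivAt.comp_hasDerivAt t h1
  simpa [imM, Function.comp_def] using h2

theorem EF_hasDeriv_zero
    (B C D : ℝ → Matrix (Fin n) (Fin n) ℝ) (hCsymm : ∀ s, (C s).IsSymm)
    (H H' : ℝ → Matrix (Fin n) (Fin n) ℂ)
    (hHd : ∀ s, ∀ i j, HasDerivAt (fun t => H t i j) (H' s i j) s)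
    (hHsymm : ∀ s, (H s).IsSymm)
    (hHpos : ∀ s, (Matrix.of fun i j => (H s i j).im : Matrix (Fin n) (Fin n) ℝ).PosDef)
    (hRic : ∀ s, H' s + H s * (C s).map (Complex.ofReal) * H s
        + (B s).map (Complex.ofReal) * H s
        + H s * ((B s).map (Complex.ofReal))ᵀ
        + (D s).map (Complex.ofReal) = 0)
    (x' ξ' x'' ξ'' : ℝ → Fin n → ℝ)
    (hx' : ∀ s, HasDerivAt x' (x'' s) s)
    (hξ' : ∀ s, HasDerivAt ξ' (ξ'' s) s)
    (hxeq : ∀ s, x'' s = (B s)ᵀ.mulVec (x' s) + (C s).mulVec (ξ' s))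
    (hξeq : ∀ s, ξ'' s = -((D s).mulVec (x' s)) - (B s).mulVec (ξ' s))
    (t : ℝ) : HasDerivAt (EF H x' ξ') 0 t := by
  have hdet : IsUnit (imM (H t)).det := Gunit' (H t) (hHpos t)
  have hGu : IsUnit (imM (H t)) := (Matrix.isUnit_iff_isUnit_det _).2 hdet
  have hu' : ∀ i, HasDerivAt (fun r => uF H x' ξ' r i)
      ((-((cplx (B t) + H t * cplx (C t)) *ᵥ uF H x' ξ' t)) i) t := by
    intro i
    have h := hasDerivAt_uF (hHd t) (hx' t) (hξ' t) i
    rw [u_deriv_eq (H t) (H' t) (B t) (C t) (D t) (x' t) (ξ' t) (x'' t) (ξ'' t)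
      (hRic t) (hxeq t) (hξeq t)] at h
    exact h
  have hGinv : HasDerivAt (fun r => (imM (H r))⁻¹)
      (-((imM (H t))⁻¹ * imM (H' t) * (imM (H t))⁻¹)) t :=
    hasDerivAt_inv (hasDerivAt_imM (hHd t)) hGu
  have hw : ∀ i, HasDerivAt (fun r => ((imM (H r))⁻¹ *ᵥ uF H x' ξ' r) i)
      ((-((imM (H t))⁻¹ * imM (H' t) * (imM (H t))⁻¹) *ᵥ uF H x' ξ' t
        + (imM (H t))⁻¹ *ᵥ (-((cplx (B t) + H t * cplx (C t)) *ᵥ uF H x' ξ' t))) i) t :=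
    fun i => hasDerivAt_mulVec (fun i j => hasDerivAt_entry hGinv i j) hu' i
  have hd1 := hasDerivAt_dot hu' (fun i => hasDerivAt_cvec (hx' t) i)
  have hd2 := hasDerivAt_dot hu' hw
  have hE := (hd1.neg).add (hd2.const_mul (Complex.I/2))
  have hzero := Evalue_zero (H t) (H' t) (B t) (C t) (D t) (x' t) (ξ' t) (x'' t)
    (uF H x' ξ' t) (-((cplx (B t) + H t * cplx (C t)) *ᵥ uF H x' ξ' t)) ((imM (H t))⁻¹)
    rfl rfl rfl (hRic t) (hHsymm t) (hCsymm t) hdet (hxeq t)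
  rw [hzero] at hE
  exact hE

end Analytic
section Value

variable {n : ℕ}

theorem EF_zero {H : ℝ → Matrix (Fin n) (Fin n) ℂ} {x' ξ' : ℝ → Fin n → ℝ}
    (hH0 : H 0 = Complex.I • (1 : Matrix (Fin n) (Fin n) ℂ)) :
    EF H x' ξ' 0 = Complex.I/2 * ((∑ i, (x' 0 i)^2 + ∑ i, (ξ' 0 i)^2 : ℝ) : ℂ) := by
  have hG0 : imM (H 0) = 1 := by
    ext i j
    simp [imM, hH0, Matrix.smul_apply, Matrix.one_apply, apply_ite]
  have hu0 : uF H x' ξ' 0 = fun i => (ξ' 0 i : ℂ) - Complex.I * (x' 0 i : ℂ) := by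
    funext i
    simp [uF, hH0, Matrix.smul_mulVec, Matrix.one_mulVec, cvec]
  have : EF H x' ξ' 0 = -(uF H x' ξ' 0 ⬝ᵥ cvec (x' 0))
      + Complex.I/2 * (uF H x' ξ' 0 ⬝ᵥ (imM (H 0))⁻¹ *ᵥ uF H x' ξ' 0) := rfl
  rw [this, hG0, inv_one, Matrix.one_mulVec, hu0]
  simp only [dotProduct, cvec]
  rw [Finset.mul_sum]
  push_cast
  rw [mul_add, Finset.mul_sum, Finset.mul_sum, ← Finset.sum_add_distrib,
    ← Finset.sum_neg_distrib, ← Finset.sum_add_distrib]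
  refine Finset.sum_congr rfl fun i _ => ?_
  linear_combination (Complex.I/2 * ((x' 0 i : ℂ))^2 - ((ξ' 0 i : ℂ)) * ((x' 0 i : ℂ))) * Complex.I_sq

end Value

end WithInstances
section Schur

variable {n : ℕ}

theorem schur_entry (A : Matrix (Fin n) (Fin n) ℂ) (v : Fin n → ℂ) :
    ((Matrix.of fun (_ : Unit) j => v j) * A * (Matrix.of fun i (_ : Unit) => v i))
        (default : Unit) (default : Unit) = v ⬝ᵥ A *ᵥ v := by
  rw [Matrix.mul_assoc]
  simp [Matrix.mul_apply, Matrix.mulVec, dotProduct, Finset.mul_sum, mul_assoc]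

end Schur

end DetMAux

open DetMAux

/-- The determinant formula `det M(s) = (i/2)(2i)ⁿ(|x′(0)|² + |ξ′(0)|²)
det(Im H(s))` for the Hessian block matrix
`M(s) = [[2i·Im H(s), ξ′ − H·x′], [(ξ′ − H·x′)ᵀ, (H·x′ − ξ′)·x′]]`
(Step 8 of the quasimode construction); in particular `M(s)` is invertible whenever
`(x′(0), ξ′(0)) ≠ (0,0)`. -/
theorem det_M_formula (n : ℕ) (hn : 1 ≤ n)
    (B C D : ℝ → Matrix (Fin n) (Fin n) ℝ) (hCsymm : ∀ s, (C s).IsSymm)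
    (H H' : ℝ → Matrix (Fin n) (Fin n) ℂ)
    (hHd : ∀ s, ∀ i j, HasDerivAt (fun t => H t i j) (H' s i j) s)
    (hHsymm : ∀ s, (H s).IsSymm)
    (hHpos : ∀ s, (Matrix.of fun i j => (H s i j).im : Matrix (Fin n) (Fin n) ℝ).PosDef)
    (hH0 : H 0 = Complex.I • (1 : Matrix (Fin n) (Fin n) ℂ))
    (hRic : ∀ s, H' s + H s * (C s).map (Complex.ofReal) * H s
        + (B s).map (Complex.ofReal) * H s
        + H s * ((B s).map (Complex.ofReal))ᵀ
        + (D s).map (Complex.ofReal) = 0)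
    (x ξ x' ξ' x'' ξ'' : ℝ → Fin n → ℝ)
    (hx : ∀ s, HasDerivAt x (x' s) s)
    (hx' : ∀ s, HasDerivAt x' (x'' s) s)
    (hξ : ∀ s, HasDerivAt ξ (ξ' s) s)
    (hξ' : ∀ s, HasDerivAt ξ' (ξ'' s) s)
    (hxeq : ∀ s, x'' s = (B s)ᵀ.mulVec (x' s) + (C s).mulVec (ξ' s))
    (hξeq : ∀ s, ξ'' s = -((D s).mulVec (x' s)) - (B s).mulVec (ξ' s))
    (M : ℝ → Matrix (Fin n ⊕ Unit) (Fin n ⊕ Unit) ℂ)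
    (hM : ∀ s, M s = Matrix.fromBlocks
        (Matrix.of fun i j => 2 * Complex.I * ((H s i j).im : ℂ))
        (Matrix.of fun i (_ : Unit) =>
          (ξ' s i : ℂ) - (H s).mulVec (fun j => (x' s j : ℂ)) i)
        (Matrix.of fun (_ : Unit) j =>
          (ξ' s j : ℂ) - (H s).mulVec (fun k => (x' s k : ℂ)) j)
        (Matrix.of fun (_ : Unit) (_ : Unit) =>
          ((H s).mulVec (fun j => (x' s j : ℂ)) - fun i => (ξ' s i : ℂ))
            ⬝ᵥ (fun j => (x' s j : ℂ)))) :
    (∀ s : ℝ, (M s).det = (Complex.I / 2) * (2 * Complex.I) ^ n *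
        (((∑ i, (x' 0 i) ^ 2 + ∑ i, (ξ' 0 i) ^ 2 : ℝ)) : ℂ) *
        (((Matrix.of fun i j => (H s i j).im : Matrix (Fin n) (Fin n) ℝ).det : ℝ) : ℂ)) ∧
      ((¬ (x' 0 = 0 ∧ ξ' 0 = 0)) → ∀ s : ℝ, IsUnit (M s)) := by

  have hEd := EF_hasDeriv_zero B C D hCsymm H H' hHd hHsymm hHpos hRic x' ξ' x'' ξ''
    hx' hξ' hxeq hξeq
  have hEs : ∀ s, EF H x' ξ' s
      = Complex.I/2 * ((∑ i, (x' 0 i)^2 + ∑ i, (ξ' 0 i)^2 : ℝ) : ℂ) := by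
    intro s
    rw [is_const_of_deriv_eq_zero (fun t => (hEd t).differentiableAt)
      (fun t => (hEd t).deriv) s 0]
    exact EF_zero hH0
  have h2I : (2 * Complex.I : ℂ) ≠ 0 := by simp [Complex.ext_iff]
  have hI2 : ((2 * Complex.I : ℂ))⁻¹ = -(Complex.I/2) := by
    apply inv_eq_of_mul_eq_one_right
    linear_combination -Complex.I_sq
  have key : ∀ s : ℝ, (M s).det = (Complex.I / 2) * (2 * Complex.I) ^ n *
      (((∑ i, (x' 0 i) ^ 2 + ∑ i, (ξ' 0 i) ^ 2 : ℝ)) : ℂ) *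
      (((Matrix.of fun i j => (H s i j).im : Matrix (Fin n) (Fin n) ℝ).det : ℝ) : ℂ) := by
    intro s
    have hdet : IsUnit (imM (H s)).det := Gunit' (H s) (hHpos s)
    have hdetval : (imM (H s)).det
        = (((Matrix.of fun i j => (H s i j).im : Matrix (Fin n) (Fin n) ℝ).det : ℝ) : ℂ) := by
      rw [show imM (H s) = Complex.ofRealHom.mapMatrix
          (Matrix.of fun i j => (H s i j).im : Matrix (Fin n) (Fin n) ℝ) from by ext i j; rfl,
        ← RingHom.map_det]
      rfl
    have hA : (Matrix.of fun i j => 2 * Complex.I * ((H s i j).im : ℂ)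
        : Matrix (Fin n) (Fin n) ℂ) = (2 * Complex.I) • imM (H s) := by
      ext i j; simp [imM, Matrix.smul_apply]
    have hdetA : (Matrix.of fun i j => 2 * Complex.I * ((H s i j).im : ℂ)
        : Matrix (Fin n) (Fin n) ℂ).det = (2 * Complex.I) ^ n * (imM (H s)).det := by
      rw [hA, Matrix.det_smul, Fintype.card_fin]
    haveI : Invertible (Matrix.of fun i j => 2 * Complex.I * ((H s i j).im : ℂ)
        : Matrix (Fin n) (Fin n) ℂ) := by
      apply Matrix.invertibleOfIsUnitDet
      rw [hdetA]
      exact (IsUnit.mk0 _ (pow_ne_zero n h2I)).mul hdet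
    have hAinv : (Matrix.of fun i j => 2 * Complex.I * ((H s i j).im : ℂ)
        : Matrix (Fin n) (Fin n) ℂ)⁻¹ = (2 * Complex.I)⁻¹ • (imM (H s))⁻¹ := by
      apply Matrix.inv_eq_right_inv
      rw [hA, Matrix.smul_mul, Matrix.mul_smul, Matrix.mul_nonsing_inv _ hdet, smul_smul,
        mul_inv_cancel₀ h2I, one_smul]
    have hdetS : ∀ (S : Matrix Unit Unit ℂ), S.det = S default default :=
      fun S => Matrix.det_unique S
    rw [hM s, Matrix.det_fromBlocks₁₁, hdetS]
    have hv : (fun j => (ξ' s j : ℂ) - (H s).mulVec (fun k => (x' s k : ℂ)) j)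
        = uF H x' ξ' s := rfl
    have hschur : (Matrix.of (fun (_ : Unit) (_ : Unit) =>
          ((H s).mulVec (fun j => (x' s j : ℂ)) - fun i => (ξ' s i : ℂ))
            ⬝ᵥ (fun j => (x' s j : ℂ)))
        - (Matrix.of fun (_ : Unit) j => (ξ' s j : ℂ) - (H s).mulVec (fun k => (x' s k : ℂ)) j)
          * ⅟(Matrix.of fun i j => 2 * Complex.I * ((H s i j).im : ℂ))
          * (Matrix.of fun i (_ : Unit) =>
              (ξ' s i : ℂ) - (H s).mulVec (fun j => (x' s j : ℂ)) i))
          (default : Unit) (default : Unit) = EF H x' ξ' s := by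
      rw [Matrix.sub_apply, Matrix.invOf_eq_nonsing_inv, hAinv]
      have hD : (Matrix.of (fun (_ : Unit) (_ : Unit) =>
            ((H s).mulVec (fun j => (x' s j : ℂ)) - fun i => (ξ' s i : ℂ))
              ⬝ᵥ (fun j => (x' s j : ℂ)))) (default : Unit) (default : Unit)
          = -(uF H x' ξ' s ⬝ᵥ cvec (x' s)) := by
        rw [show ((H s).mulVec (fun j => (x' s j : ℂ)) - fun i => (ξ' s i : ℂ))
            = -(uF H x' ξ' s) from by funext i; simp [uF, cvec, Matrix.mulVec, dotProduct],
          neg_dotProduct]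
        rfl
      have hC : ((Matrix.of fun (_ : Unit) j =>
            (ξ' s j : ℂ) - (H s).mulVec (fun k => (x' s k : ℂ)) j)
          * ((2 * Complex.I)⁻¹ • (imM (H s))⁻¹)
          * (Matrix.of fun i (_ : Unit) =>
              (ξ' s i : ℂ) - (H s).mulVec (fun j => (x' s j : ℂ)) i))
            (default : Unit) (default : Unit)
          = (2 * Complex.I)⁻¹ * (uF H x' ξ' s ⬝ᵥ (imM (H s))⁻¹ *ᵥ uF H x' ξ' s) := by
        rw [Matrix.mul_smul, Matrix.smul_mul, Matrix.smul_apply, smul_eq_mul]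
        congr 1
        exact schur_entry ((imM (H s))⁻¹) (uF H x' ξ' s)
      rw [hD, hC, hI2]
      show _ = -(uF H x' ξ' s ⬝ᵥ cvec (x' s))
        + Complex.I/2 * (uF H x' ξ' s ⬝ᵥ (imM (H s))⁻¹ *ᵥ uF H x' ξ' s)
      ring
    rw [hschur, hdetA, hEs s, hdetval]
    ring
  refine ⟨key, ?_⟩
  intro hne s
  have hQpos : 0 < (∑ i, (x' 0 i)^2 + ∑ i, (ξ' 0 i)^2 : ℝ) := by
    have h1 : 0 ≤ ∑ i, (x' 0 i)^2 := Finset.sum_nonneg fun j _ => sq_nonneg _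
    have h2 : 0 ≤ ∑ i, (ξ' 0 i)^2 := Finset.sum_nonneg fun j _ => sq_nonneg _
    rcases not_and_or.mp hne with h | h
    · obtain ⟨i, hi⟩ := Function.ne_iff.mp h
      have h3 : 0 < ∑ i, (x' 0 i)^2 :=
        Finset.sum_pos' (fun j _ => sq_nonneg _)
          ⟨i, Finset.mem_univ i, pow_two_pos_of_ne_zero hi⟩
      linarith
    · obtain ⟨i, hi⟩ := Function.ne_iff.mp h
      have h3 : 0 < ∑ i, (ξ' 0 i)^2 :=
        Finset.sum_pos' (fun j _ => sq_nonneg _)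
          ⟨i, Finset.mem_univ i, pow_two_pos_of_ne_zero hi⟩
      linarith
  rw [Matrix.isUnit_iff_isUnit_det, key s, isUnit_iff_ne_zero]
  have hdetpos := (hHpos s).det_pos
  apply mul_ne_zero
  apply mul_ne_zero
  apply mul_ne_zero
  · simp [Complex.ext_iff]
  · exact pow_ne_zero _ h2I
  · exact Complex.ofReal_ne_zero.mpr (ne_of_gt hQpos)
  · exact Complex.ofReal_ne_zero.mpr (ne_of_gt hdetpos)
end

section
/- Let H₁ and H₂ be complex Hilbert spaces, let V be a linear subspace of H₂, let W be a closed linear subspace of H₂, let A : V → H₁ be a linear map, and let C ≥ 0 be such that |⟨v, f⟩| ≤ C·‖f‖·‖A v‖ for all f ∈ W and all v ∈ V. Then there exists a continuous linear operator E : W → H₁ with operator norm ‖E‖ ≤ C such that ⟨A v, E f⟩ = ⟨v, f⟩ for all f ∈ W and all v ∈ V. (This is the construction of the bounded solution operator E_s in Proposition 2.1(d).) -/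
/-- Construction of the bounded solution operator `E_s`
(Proposition 2.1(d)): if `V` is a subspace and `W` a closed subspace of the Hilbert
space `H₂`, `A : V → H₁` is linear and `|⟨v, f⟩| ≤ C‖f‖‖Av‖` for all `f ∈ W`, `v ∈ V`,
then there is a continuous linear `E : W → H₁` with `‖E‖ ≤ C` and
`⟨Av, Ef⟩ = ⟨v, f⟩` for all `f ∈ W`, `v ∈ V`. -/
theorem bounded_solution_operator {H₁ H₂ : Type*}
    [NormedAddCommGroup H₁] [InnerProductSpace ℂ H₁] [CompleteSpace H₁]
    [NormedAddCommGroup H₂] [InnerProductSpace ℂ H₂] [CompleteSpace H₂]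
    (V W : Submodule ℂ H₂) (hW : IsClosed (W : Set H₂))
    (A : V →ₗ[ℂ] H₁) (C : ℝ) (hC : 0 ≤ C)
    (h : ∀ f : W, ∀ v : V, ‖(inner ℂ ((v : H₂)) ((f : H₂)) : ℂ)‖ ≤ C * ‖(f : H₂)‖ * ‖A v‖) :
    ∃ E : W →L[ℂ] H₁, ‖E‖ ≤ C ∧
      ∀ (f : W) (v : V), (inner ℂ (A v) (E f) : ℂ) = inner ℂ ((v : H₂)) ((f : H₂)) := by
  classical
  set K : Submodule ℂ H₁ := (LinearMap.range A).topologicalClosure with hK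
  have hKclosed : IsClosed (K : Set H₁) := Submodule.isClosed_topologicalClosure _
  haveI : CompleteSpace K := hKclosed.completeSpace_coe
  -- Existence of a representative for each `f`.
  have hex : ∀ f : W, ∃ x : H₁, x ∈ K ∧ ‖x‖ ≤ C * ‖(f : H₂)‖ ∧
      ∀ v : V, (inner ℂ (A v) x : ℂ) = inner ℂ ((v : H₂)) ((f : H₂)) := by
    intro f
    set ℓ : V →ₗ[ℂ] ℂ := ((innerSL ℂ ((f : H₂))).toLinearMap).comp V.subtype with hℓ
    have hker : LinearMap.ker A ≤ LinearMap.ker ℓ := by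
      intro v hv
      have hv' : A v = 0 := hv
      have hb := h f v
      rw [hv', norm_zero, mul_zero] at hb
      have h0 : (inner ℂ ((v : H₂)) ((f : H₂)) : ℂ) = 0 :=
        norm_eq_zero.mp (le_antisymm hb (norm_nonneg _))
      have : ℓ v = 0 := by
        simp only [hℓ, LinearMap.comp_apply, ContinuousLinearMap.coe_coe, innerSL_apply_apply,
          Submodule.subtype_apply]
        rw [← inner_conj_symm, h0, map_zero]
      exact this
    set g : ↥(LinearMap.range A) →ₗ[ℂ] ℂ :=
      ((LinearMap.ker A).liftQ ℓ hker).comp A.quotKerEquivRange.symm.toLinearMap with hg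
    have hgval : ∀ v : V, g ⟨A v, LinearMap.mem_range_self A v⟩
        = (inner ℂ ((f : H₂)) ((v : H₂)) : ℂ) := by
      intro v
      have h1 : A.quotKerEquivRange.symm ⟨A v, LinearMap.mem_range_self A v⟩
          = Submodule.Quotient.mk v := by
        rw [LinearEquiv.symm_apply_eq]
        exact Subtype.ext (LinearMap.quotKerEquivRange_apply_mk A v).symm
      simp [hg, h1, hℓ]
    have hgbound : ∀ u : ↥(LinearMap.range A), ‖g u‖ ≤ (C * ‖(f : H₂)‖) * ‖u‖ := by
      rintro ⟨u, hu⟩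
      obtain ⟨v, rfl⟩ := hu
      rw [hgval v]
      have h2 : ‖(inner ℂ ((f : H₂)) ((v : H₂)) : ℂ)‖ = ‖(inner ℂ ((v : H₂)) ((f : H₂)) : ℂ)‖ :=
        norm_inner_symm _ _
      have h3 : ‖(⟨A v, LinearMap.mem_range_self A v⟩ : ↥(LinearMap.range A))‖ = ‖A v‖ := rfl
      rw [h2, h3]
      exact h f v
    set gC := g.mkContinuous (C * ‖(f : H₂)‖) hgbound with hgC
    obtain ⟨G, hGext, hGnorm⟩ := exists_extension_norm_eq (LinearMap.range A) gC
    set x := (InnerProductSpace.toDual ℂ H₁).symm G with hx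
    have hxval : ∀ u : H₁, (inner ℂ x u : ℂ) = G u := fun u =>
      InnerProductSpace.toDual_symm_apply
    refine ⟨(K.orthogonalProjectionOnto x : H₁), Submodule.coe_mem _, ?_, ?_⟩
    · have h4 : ‖(K.orthogonalProjectionOnto x : H₁)‖ ≤ ‖x‖ := by
        have := K.orthogonalProjectionOnto_norm_le
        calc ‖(K.orthogonalProjectionOnto x : H₁)‖ = ‖K.orthogonalProjectionOnto x‖ := rfl
          _ ≤ ‖K.orthogonalProjectionOnto‖ * ‖x‖ := (K.orthogonalProjectionOnto).le_opNorm x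
          _ ≤ 1 * ‖x‖ := by gcongr
          _ = ‖x‖ := one_mul _
      have h5 : ‖x‖ = ‖G‖ := (InnerProductSpace.toDual ℂ H₁).symm.norm_map G
      have h6 : ‖gC‖ ≤ C * ‖(f : H₂)‖ :=
        g.mkContinuous_norm_le (mul_nonneg hC (norm_nonneg _)) hgbound
      calc ‖(K.orthogonalProjectionOnto x : H₁)‖ ≤ ‖x‖ := h4
        _ = ‖G‖ := h5
        _ = ‖gC‖ := hGnorm
        _ ≤ C * ‖(f : H₂)‖ := h6
    · intro v
      have hmem : A v ∈ K := Submodule.le_topologicalClosure _ (LinearMap.mem_range_self A v)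
      have hperp : x - (K.orthogonalProjectionOnto x : H₁) ∈ Kᗮ :=
        K.sub_starProjection_mem_orthogonal x
      have hz : (inner ℂ (A v) (x - (K.orthogonalProjectionOnto x : H₁)) : ℂ) = 0 :=
        hperp (A v) hmem
      have h7 : (inner ℂ (A v) ((K.orthogonalProjectionOnto x : H₁)) : ℂ) = inner ℂ (A v) x := by
        rw [inner_sub_right] at hz
        linear_combination -hz
      rw [h7]
      have h8 : (inner ℂ (A v) x : ℂ) = (starRingEnd ℂ) (inner ℂ x (A v)) :=
        (inner_conj_symm _ _).symm
      rw [h8, hxval (A v)]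
      have h9 : G (A v) = gC ⟨A v, LinearMap.mem_range_self A v⟩ :=
        hGext ⟨A v, LinearMap.mem_range_self A v⟩
      rw [h9]
      have h10 : gC ⟨A v, LinearMap.mem_range_self A v⟩
          = (inner ℂ ((f : H₂)) ((v : H₂)) : ℂ) := hgval v
      rw [h10, inner_conj_symm]
  -- Uniqueness of representatives.
  have huniq : ∀ x y : H₁, x ∈ K → y ∈ K →
      (∀ v : V, (inner ℂ (A v) x : ℂ) = inner ℂ (A v) y) → x = y := by
    intro x y hx hy hxy
    have hsub : x - y ∈ K := K.sub_mem hx hy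
    have h1 : x - y ∈ (LinearMap.range A)ᗮ := by
      intro u hu
      obtain ⟨v, rfl⟩ := hu
      rw [inner_sub_right, hxy v, sub_self]
    have hperp : x - y ∈ Kᗮ := by
      rw [hK, ← Submodule.orthogonal_orthogonal_eq_closure]
      exact (Submodule.le_orthogonal_orthogonal _) h1
    have h0 : (inner ℂ (x - y) (x - y) : ℂ) = 0 := hperp (x - y) hsub
    have := inner_self_eq_zero.mp h0
    exact sub_eq_zero.mp this
  set e : W → H₁ := fun f => Classical.choose (hex f) with he
  have heK : ∀ f, e f ∈ K := fun f => (Classical.choose_spec (hex f)).1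
  have heN : ∀ f, ‖e f‖ ≤ C * ‖(f : H₂)‖ := fun f => (Classical.choose_spec (hex f)).2.1
  have heP : ∀ (f : W) (v : V), (inner ℂ (A v) (e f) : ℂ) = inner ℂ ((v : H₂)) ((f : H₂)) :=
    fun f => (Classical.choose_spec (hex f)).2.2
  set Elin : W →ₗ[ℂ] H₁ :=
    { toFun := e
      map_add' := by
        intro f g
        refine huniq _ _ (heK _) (K.add_mem (heK f) (heK g)) ?_
        intro v
        rw [inner_add_right, heP, heP, heP]
        push_cast
        rw [inner_add_right]
      map_smul' := by
        intro c f
        refine huniq _ _ (heK _) (K.smul_mem c (heK f)) ?_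
        intro v
        rw [inner_smul_right, heP, heP]
        push_cast
        rw [inner_smul_right]
        rfl } with hElin
  refine ⟨Elin.mkContinuous C (fun f => by exact heN f), ?_, ?_⟩
  · exact Elin.mkContinuous_norm_le hC _
  · intro f v
    exact heP f v
end

section
/- Let X be a complex Hilbert space, let Y and Z be normed spaces over ℂ, let T : X → Y and K : X → Z be continuous linear operators with K compact, and let C > 0 satisfy ‖v‖ ≤ C·(‖T v‖ + ‖K v‖) for all v ∈ X. Then there exists C′ > 0 such that ‖v‖ ≤ C′·‖T v‖ for all v in the orthogonal complement of the kernel of T. (This is the improved a priori estimate (2.2) proved by the compactness–contradiction argument in Proposition 2.1(c).) -/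
/-- The improved a priori estimate (2.2) of Proposition 2.1(c):
if `T : X → Y` and `K : X → Z` are continuous linear, `K` is compact, and
`‖v‖ ≤ C(‖Tv‖ + ‖Kv‖)` for all `v`, then there is `C′ > 0` with `‖v‖ ≤ C′‖Tv‖`
for all `v` in the orthogonal complement of `ker T`. -/
theorem estimate_on_orthogonal_complement {X Y Z : Type*}
    [NormedAddCommGroup X] [InnerProductSpace ℂ X] [CompleteSpace X]
    [NormedAddCommGroup Y] [NormedSpace ℂ Y]
    [NormedAddCommGroup Z] [NormedSpace ℂ Z]
    (T : X →L[ℂ] Y) (K : X →L[ℂ] Z) (hK : IsCompactOperator (⇑K))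
    (C : ℝ) (hC : 0 < C)
    (h : ∀ v : X, ‖v‖ ≤ C * (‖T v‖ + ‖K v‖)) :
    ∃ C' > (0:ℝ), ∀ v ∈ (LinearMap.ker (T : X →ₗ[ℂ] Y))ᗮ, ‖v‖ ≤ C' * ‖T v‖ := by
  by_contra hcon
  push_neg at hcon
  have hv : ∀ n : ℕ, ∃ v ∈ (LinearMap.ker (T : X →ₗ[ℂ] Y))ᗮ, ((n : ℝ) + 1) * ‖T v‖ < ‖v‖ := by
    intro n
    obtain ⟨v, hv1, hv2⟩ := hcon ((n : ℝ) + 1) (by positivity)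
    exact ⟨v, hv1, hv2⟩
  choose v hvS hvlt using hv
  have hvne : ∀ n, v n ≠ 0 := by
    intro n hn
    have := hvlt n
    rw [hn] at this
    simp at this
  set u : ℕ → X := fun n => (‖v n‖)⁻¹ • v n with hu
  have hunorm : ∀ n, ‖u n‖ = 1 := by
    intro n
    have hne : ‖v n‖ ≠ 0 := norm_ne_zero_iff.mpr (hvne n)
    simp [hu, norm_smul, abs_of_nonneg (inv_nonneg.mpr (norm_nonneg _)),
      inv_mul_cancel₀ hne]
  have huS : ∀ n, u n ∈ (LinearMap.ker (T : X →ₗ[ℂ] Y))ᗮ := fun n =>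
    Submodule.smul_of_tower_mem _ _ (hvS n)
  have hTu : ∀ n, ‖T (u n)‖ ≤ 1 / ((n : ℝ) + 1) := by
    intro n
    have hvpos : 0 < ‖v n‖ := norm_pos_iff.mpr (hvne n)
    have hTeq : T (u n) = (‖v n‖)⁻¹ • T (v n) := by
      simp [hu, map_smul]
    have hnpos : (0:ℝ) < (n : ℝ) + 1 := by positivity
    rw [hTeq, norm_smul, norm_inv, norm_norm]
    rw [inv_mul_le_iff₀ hvpos]
    have := (hvlt n).le
    rw [mul_one_div, le_div_iff₀ hnpos]
    linarith
  have hT0 : Filter.Tendsto (fun n => T (u n)) Filter.atTop (nhds 0) := by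
    rw [tendsto_zero_iff_norm_tendsto_zero]
    exact squeeze_zero (fun n => norm_nonneg _) hTu
      tendsto_one_div_add_atTop_nhds_zero_nat
  -- compactness: extract a convergent subsequence of K (u n)
  have hK' : IsCompactOperator ⇑(K.toLinearMap) := hK
  obtain ⟨M, hM, hMsub⟩ := hK'.image_closedBall_subset_compact (𝕜₁ := ℂ) 1
  have hKuM : ∀ n, K (u n) ∈ M := by
    intro n
    apply hMsub
    exact ⟨u n, by simp [Metric.mem_closedBall, hunorm n, dist_eq_norm], rfl⟩
  obtain ⟨z, _, φ, hφ, hz⟩ := hM.tendsto_subseq hKuM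
  have hTc : Filter.Tendsto (fun n => T (u (φ n))) Filter.atTop (nhds 0) :=
    hT0.comp (hφ.tendsto_atTop)
  have hKc : CauchySeq (fun n => K (u (φ n))) := hz.cauchySeq
  have hcauchy : CauchySeq (u ∘ φ) := by
    rw [Metric.cauchySeq_iff]
    intro ε hε
    obtain ⟨N1, hN1⟩ := (Metric.tendsto_atTop.mp hTc) (ε / (4 * C)) (by positivity)
    obtain ⟨N2, hN2⟩ := Metric.cauchySeq_iff.mp hKc (ε / (2 * C)) (by positivity)
    refine ⟨max N1 N2, fun m hm n hn => ?_⟩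
    have h1 := hN1 m (le_of_max_le_left hm)
    have h1' := hN1 n (le_of_max_le_left hn)
    have h2 := hN2 m (le_of_max_le_right hm) n (le_of_max_le_right hn)
    rw [dist_zero_right] at h1 h1'
    rw [dist_eq_norm] at h2 ⊢
    have hmain := h (u (φ m) - u (φ n))
    have hTsub : ‖T (u (φ m) - u (φ n))‖ ≤ ‖T (u (φ m))‖ + ‖T (u (φ n))‖ := by
      rw [map_sub]; exact norm_sub_le _ _
    have hKsub : ‖K (u (φ m) - u (φ n))‖ = ‖K (u (φ m)) - K (u (φ n))‖ := by
      rw [map_sub]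
    calc ‖(u ∘ φ) m - (u ∘ φ) n‖
        ≤ C * (‖T (u (φ m) - u (φ n))‖ + ‖K (u (φ m) - u (φ n))‖) := hmain
      _ < ε := by
          rw [hKsub]
          have hC' : C ≠ 0 := ne_of_gt hC
          have key : C * (‖T (u (φ m) - u (φ n))‖ + ‖K (u (φ m)) - K (u (φ n))‖)
              < C * (ε / (4 * C) + ε / (4 * C) + ε / (2 * C)) := by
            apply mul_lt_mul_of_pos_left _ hC
            linarith
          have heq : C * (ε / (4 * C) + ε / (4 * C) + ε / (2 * C)) = ε := by
            field_simp
            ring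
          linarith
  obtain ⟨w, hw⟩ := cauchySeq_tendsto_of_complete hcauchy
  have hwnorm : ‖w‖ = 1 := by
    have h1 : Filter.Tendsto (fun n => ‖(u ∘ φ) n‖) Filter.atTop (nhds ‖w‖) :=
      hw.norm
    have h2 : Filter.Tendsto (fun n => ‖(u ∘ φ) n‖) Filter.atTop (nhds 1) := by
      have : (fun n => ‖(u ∘ φ) n‖) = fun _ => (1:ℝ) := by
        funext n; exact hunorm (φ n)
      rw [this]; exact tendsto_const_nhds
    exact tendsto_nhds_unique h1 h2
  have hTw : T w = 0 := by
    have h1 : Filter.Tendsto (fun n => T ((u ∘ φ) n)) Filter.atTop (nhds (T w)) :=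
      (T.continuous.tendsto w).comp hw
    exact tendsto_nhds_unique h1 hTc
  have hwS : w ∈ (LinearMap.ker (T : X →ₗ[ℂ] Y))ᗮ :=
    (LinearMap.ker (T : X →ₗ[ℂ] Y)).isClosed_orthogonal.mem_of_tendsto hw
      (Filter.Eventually.of_forall fun n => huS (φ n))
  have hwker : w ∈ LinearMap.ker (T : X →ₗ[ℂ] Y) := LinearMap.mem_ker.mpr hTw
  have : (inner ℂ w w : ℂ) = 0 := hwS w hwker
  have hw0 : w = 0 := inner_self_eq_zero.mp this
  rw [hw0] at hwnorm
  simp at hwnorm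
end

section
/- Let n ≥ 2 and let H₁, H₂, H₃, H₄ be symmetric n×n complex matrices with Im Hⱼ positive definite for each j. Let a₁, a₂, a₃, a₄, b₁, b₂, b₃, b₄ ∈ ℝⁿ be such that a₁ and a₂ are linearly independent, a₃ = λ₃·a₁ and a₄ = λ₄·a₂ for some nonzero real numbers λ₃, λ₄. Let N be the (n+4)×(n+4) complex matrix with block form: top-left n×n block Σⱼ Hⱼ; top-right n×4 block whose j-th column is bⱼ − Hⱼ·aⱼ; bottom-left 4×n block the transpose of the top-right block; bottom-right 4×4 diagonal block with j-th diagonal entry (Hⱼ·aⱼ − bⱼ)·aⱼ. Then det N ≠ 0. (This is the invertibility of the Hessian ∇²ₓ,ₜΘ of the four-wave phase function in the proof of Theorem 1.7 on semilinear equations.) -/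
open Matrix

private lemma dot_eq_double {n : ℕ} (M : Matrix (Fin n) (Fin n) ℝ) (w : Fin n → ℂ) :
    star w ⬝ᵥ ((M.map (Complex.ofReal)) *ᵥ w) =
      ∑ i, ∑ k, (starRingEnd ℂ) (w i) * ((M i k : ℂ) * w k) := by
  simp [dotProduct, Matrix.mulVec, Finset.mul_sum, Matrix.map_apply]

private lemma quad_im_symm {n : ℕ} (M : Matrix (Fin n) (Fin n) ℝ) (hM : M.IsSymm)
    (w : Fin n → ℂ) :
    (∑ i, ∑ k, (starRingEnd ℂ) (w i) * ((M i k : ℂ) * w k)).im = 0 := by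
  have key : ∀ i k : Fin n, ((starRingEnd ℂ) (w i) * ((M i k : ℂ) * w k)).im
      = - ((starRingEnd ℂ) (w k) * ((M k i : ℂ) * w i)).im := by
    intro i k
    have h : M k i = M i k := hM.apply i k
    simp only [h, Complex.mul_im, Complex.mul_re, Complex.ofReal_re, Complex.ofReal_im,
      Complex.conj_re, Complex.conj_im]
    ring
  have h1 : (∑ i, ∑ k, (starRingEnd ℂ) (w i) * ((M i k : ℂ) * w k)).im
      = ∑ i, ∑ k, ((starRingEnd ℂ) (w i) * ((M i k : ℂ) * w k)).im := by
    simp [Complex.im_sum]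
  rw [h1]
  have h2 : (∑ i, ∑ k, ((starRingEnd ℂ) (w i) * ((M i k : ℂ) * w k)).im)
      = - ∑ i, ∑ k, ((starRingEnd ℂ) (w i) * ((M i k : ℂ) * w k)).im := by
    calc (∑ i, ∑ k, ((starRingEnd ℂ) (w i) * ((M i k : ℂ) * w k)).im)
        = ∑ i, ∑ k, - ((starRingEnd ℂ) (w k) * ((M k i : ℂ) * w i)).im :=
          Finset.sum_congr rfl fun i _ => Finset.sum_congr rfl fun k _ => key i k
      _ = - ∑ i, ∑ k, ((starRingEnd ℂ) (w k) * ((M k i : ℂ) * w i)).im := by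
          simp only [Finset.sum_neg_distrib]
      _ = - ∑ k, ∑ i, ((starRingEnd ℂ) (w k) * ((M k i : ℂ) * w i)).im := by
          rw [Finset.sum_comm]
  linarith

private lemma quad_re_eq {n : ℕ} (M : Matrix (Fin n) (Fin n) ℝ) (w : Fin n → ℂ) :
    (∑ i, ∑ k, (starRingEnd ℂ) (w i) * ((M i k : ℂ) * w k)).re =
      (fun i => (w i).re) ⬝ᵥ (M *ᵥ fun i => (w i).re)
        + (fun i => (w i).im) ⬝ᵥ (M *ᵥ fun i => (w i).im) := by
  simp only [Complex.re_sum, dotProduct, Matrix.mulVec, Finset.mul_sum,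
    ← Finset.sum_add_distrib]
  refine Finset.sum_congr rfl fun i _ => Finset.sum_congr rfl fun k _ => ?_
  simp only [Complex.mul_re, Complex.mul_im, Complex.ofReal_re, Complex.ofReal_im,
    Complex.conj_re, Complex.conj_im]
  ring

private lemma quad_re_nonneg {n : ℕ} {M : Matrix (Fin n) (Fin n) ℝ} (hM : M.PosDef)
    (w : Fin n → ℂ) :
    0 ≤ (∑ i, ∑ k, (starRingEnd ℂ) (w i) * ((M i k : ℂ) * w k)).re := by
  rw [quad_re_eq]
  have h1 := hM.posSemidef.dotProduct_mulVec_nonneg (fun i => (w i).re)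
  have h2 := hM.posSemidef.dotProduct_mulVec_nonneg (fun i => (w i).im)
  simp only [star_trivial] at h1 h2
  linarith

private lemma quad_re_zero_imp {n : ℕ} {M : Matrix (Fin n) (Fin n) ℝ} (hM : M.PosDef)
    (w : Fin n → ℂ)
    (h : (∑ i, ∑ k, (starRingEnd ℂ) (w i) * ((M i k : ℂ) * w k)).re = 0) : w = 0 := by
  rw [quad_re_eq] at h
  have h1 := hM.posSemidef.dotProduct_mulVec_nonneg (fun i => (w i).re)
  have h2 := hM.posSemidef.dotProduct_mulVec_nonneg (fun i => (w i).im)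
  simp only [star_trivial] at h1 h2
  have hre : (fun i => (w i).re) = 0 := by
    by_contra hc
    have := hM.dotProduct_mulVec_pos hc
    simp only [star_trivial] at this
    linarith
  have him : (fun i => (w i).im) = 0 := by
    by_contra hc
    have := hM.dotProduct_mulVec_pos hc
    simp only [star_trivial] at this
    linarith
  funext i
  exact Complex.ext (congrFun hre i) (congrFun him i)

/-- Invertibility of the Hessian `∇²ₓ,ₜΘ` of the four-wave phase
function in the proof of Theorem 1.7 on semilinear equations: for symmetric `n × n`
complex matrices `H₁, …, H₄` with positive definite imaginary parts and real vectors
`a₁, …, a₄, b₁, …, b₄` with `a₁, a₂` linearly independent, `a₃ = λ₃a₁`, `a₄ = λ₄a₂`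
(`λ₃, λ₄ ≠ 0`), the `(n+4) × (n+4)` block matrix `N` with top-left block `Σⱼ Hⱼ`,
top-right columns `bⱼ − Hⱼ·aⱼ`, bottom-left their transpose, and bottom-right the
diagonal matrix with entries `(Hⱼ·aⱼ − bⱼ)·aⱼ`, has nonzero determinant. -/
theorem four_wave_hessian_det_ne_zero (n : ℕ) (hn : 2 ≤ n)
    (H : Fin 4 → Matrix (Fin n) (Fin n) ℂ)
    (hHsymm : ∀ j, (H j).IsSymm)
    (hHpos : ∀ j, (Matrix.of fun i k => (H j i k).im : Matrix (Fin n) (Fin n) ℝ).PosDef)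
    (a b : Fin 4 → Fin n → ℝ)
    (hindep : LinearIndependent ℝ ![a 0, a 1])
    (lam₃ lam₄ : ℝ) (hlam₃ : lam₃ ≠ 0) (hlam₄ : lam₄ ≠ 0)
    (ha₂ : a 2 = lam₃ • a 0) (ha₃ : a 3 = lam₄ • a 1)
    (N : Matrix (Fin n ⊕ Fin 4) (Fin n ⊕ Fin 4) ℂ)
    (hN : N = Matrix.fromBlocks
        (∑ j : Fin 4, H j)
        (Matrix.of fun i (j : Fin 4) =>
          (b j i : ℂ) - (H j).mulVec (fun k => (a j k : ℂ)) i)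
        (Matrix.of fun (j : Fin 4) i =>
          (b j i : ℂ) - (H j).mulVec (fun k => (a j k : ℂ)) i)
        (Matrix.diagonal fun (j : Fin 4) =>
          ((H j).mulVec (fun k => (a j k : ℂ)) - fun i => (b j i : ℂ))
            ⬝ᵥ (fun k => (a j k : ℂ)))) :
    N.det ≠ 0 := by
  intro hdet
  obtain ⟨v, hv, hNv⟩ := Matrix.exists_mulVec_eq_zero_iff.2 hdet
  set x : Fin n → ℂ := fun i => v (Sum.inl i) with hxdef
  set t : Fin 4 → ℂ := fun j => v (Sum.inr j) with htdef
  set aC : Fin 4 → Fin n → ℂ := fun j i => (a j i : ℂ) with haCdef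
  set bC : Fin 4 → Fin n → ℂ := fun j i => (b j i : ℂ) with hbCdef
  set c : Fin 4 → Fin n → ℂ := fun j => bC j - (H j) *ᵥ (aC j) with hcdef
  set d : Fin 4 → ℂ := fun j => ((H j) *ᵥ (aC j) - bC j) ⬝ᵥ (aC j) with hddef
  set w : Fin 4 → Fin n → ℂ := fun j => x - t j • aC j with hwdef
  have hv' : v = Sum.elim x t := by funext p; cases p <;> rfl
  rw [hN, hv', Matrix.fromBlocks_mulVec] at hNv
  have e1 : (∑ j, H j) *ᵥ x + (Matrix.of fun i (j : Fin 4) => c j i) *ᵥ t = 0 := by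
    funext i
    exact congrFun hNv (Sum.inl i)
  have e2 : (Matrix.of fun (j : Fin 4) i => c j i) *ᵥ x + (Matrix.diagonal d) *ᵥ t = 0 := by
    funext j
    exact congrFun hNv (Sum.inr j)
  -- the scalar quantity
  set S : Fin 4 → ℂ := fun j => star x ⬝ᵥ (H j *ᵥ x) + t j * (c j ⬝ᵥ star x)
      + (starRingEnd ℂ) (t j) * (c j ⬝ᵥ x) + (starRingEnd ℂ) (t j) * t j * d j with hSdef
  have hSsum : ∑ j, S j = 0 := by
    have p0 : ((∑ j, H j) *ᵥ x) = ∑ j, H j *ᵥ x := by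
      funext i
      simp only [Matrix.mulVec, dotProduct, Matrix.sum_apply, Finset.sum_mul,
        Finset.sum_apply]
      exact Finset.sum_comm
    have p1 : star x ⬝ᵥ ((∑ j, H j) *ᵥ x) = ∑ j, star x ⬝ᵥ (H j *ᵥ x) := by
      rw [p0]
      simp only [dotProduct, Finset.sum_apply, Finset.mul_sum]
      exact Finset.sum_comm
    have p2 : star x ⬝ᵥ ((Matrix.of fun i (j : Fin 4) => c j i) *ᵥ t)
        = ∑ j, t j * (c j ⬝ᵥ star x) := by
      calc star x ⬝ᵥ ((Matrix.of fun i (j : Fin 4) => c j i) *ᵥ t)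
          = ∑ i, ∑ j, star x i * (c j i * t j) := by
            simp [dotProduct, Matrix.mulVec, Finset.mul_sum]
        _ = ∑ j, ∑ i, star x i * (c j i * t j) := Finset.sum_comm
        _ = ∑ j, t j * (c j ⬝ᵥ star x) := by
            refine Finset.sum_congr rfl fun j _ => ?_
            simp only [dotProduct, Finset.mul_sum]
            exact Finset.sum_congr rfl fun i _ => by ring
    have p3 : star t ⬝ᵥ ((Matrix.of fun (j : Fin 4) i => c j i) *ᵥ x)
        = ∑ j, (starRingEnd ℂ) (t j) * (c j ⬝ᵥ x) := by
      simp [dotProduct, Matrix.mulVec]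
    have p4 : star t ⬝ᵥ ((Matrix.diagonal d) *ᵥ t)
        = ∑ j, (starRingEnd ℂ) (t j) * t j * d j := by
      simp only [dotProduct, Matrix.mulVec_diagonal, Pi.star_apply]
      exact Finset.sum_congr rfl fun j _ => by
        simp [Complex.star_def]; ring
    have : star x ⬝ᵥ ((∑ j, H j) *ᵥ x + (Matrix.of fun i (j : Fin 4) => c j i) *ᵥ t)
        + star t ⬝ᵥ ((Matrix.of fun (j : Fin 4) i => c j i) *ᵥ x + (Matrix.diagonal d) *ᵥ t)
        = 0 := by rw [e1, e2]; simp
    rw [dotProduct_add, dotProduct_add, p1, p2, p3, p4] at this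
    calc ∑ j, S j
        = ∑ j, (star x ⬝ᵥ (H j *ᵥ x)) + ∑ j, (t j * (c j ⬝ᵥ star x))
          + (∑ j, ((starRingEnd ℂ) (t j) * (c j ⬝ᵥ x))
          + ∑ j, ((starRingEnd ℂ) (t j) * t j * d j)) := by
          rw [← Finset.sum_add_distrib, ← Finset.sum_add_distrib, ← Finset.sum_add_distrib]
          exact Finset.sum_congr rfl fun j _ => by rw [hSdef]; ring
      _ = 0 := this
  -- decompose each S j
  have hstar_aC : ∀ j, star (aC j) = aC j := by
    intro j; funext i; simp [haCdef, Complex.star_def, Complex.conj_ofReal]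
  have hGj : ∀ j, (Matrix.of fun i k => (H j i k).im : Matrix (Fin n) (Fin n) ℝ).IsSymm := by
    intro j
    have := (hHsymm j)
    ext i k
    simp only [Matrix.transpose_apply, Matrix.of_apply]
    rw [← this.apply k i]
  have hAj : ∀ j, (Matrix.of fun i k => (H j i k).re : Matrix (Fin n) (Fin n) ℝ).IsSymm := by
    intro j
    have := (hHsymm j)
    ext i k
    simp only [Matrix.transpose_apply, Matrix.of_apply]
    rw [← this.apply k i]
  have hHdecomp : ∀ j, H j
      = (Matrix.of fun i k => (H j i k).re : Matrix (Fin n) (Fin n) ℝ).map Complex.ofReal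
        + Complex.I • ((Matrix.of fun i k => (H j i k).im : Matrix (Fin n) (Fin n) ℝ).map Complex.ofReal) := by
    intro j
    ext i k
    simp [Complex.ext_iff]
  have hSim : ∀ j, (S j).im =
      (∑ i, ∑ k, (starRingEnd ℂ) (w j i)
        * (((Matrix.of fun i k => (H j i k).im : Matrix (Fin n) (Fin n) ℝ) i k : ℂ) * w j k)).re := by
    intro j
    have hstarw : star (w j) = star x - (starRingEnd ℂ) (t j) • aC j := by
      funext i
      simp [hwdef, haCdef, Complex.conj_ofReal]
    have hmw : H j *ᵥ w j = H j *ᵥ x - t j • (H j *ᵥ aC j) := by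
      rw [hwdef]
      simp [Matrix.mulVec_sub, Matrix.mulVec_smul]
    have hsym2 : aC j ⬝ᵥ (H j *ᵥ x) = (H j *ᵥ aC j) ⬝ᵥ x := by
      rw [Matrix.dotProduct_mulVec, ← Matrix.mulVec_transpose, (hHsymm j).eq]
    have hsym3 : aC j ⬝ᵥ (H j *ᵥ aC j) = (H j *ᵥ aC j) ⬝ᵥ aC j := dotProduct_comm _ _
    have hsym1 : (H j *ᵥ aC j) ⬝ᵥ star x = star x ⬝ᵥ (H j *ᵥ aC j) := dotProduct_comm _ _
    have hb : bC j ⬝ᵥ star x = (starRingEnd ℂ) (bC j ⬝ᵥ x) := by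
      simp [dotProduct, map_sum, hbCdef, Complex.conj_ofReal]
    have step1 : S j = star (w j) ⬝ᵥ (H j *ᵥ w j)
        + (t j * (starRingEnd ℂ) (bC j ⬝ᵥ x) + (starRingEnd ℂ) (t j) * (bC j ⬝ᵥ x)
           - (starRingEnd ℂ) (t j) * t j * (bC j ⬝ᵥ aC j)) := by
      rw [hSdef, hstarw, hmw]
      simp only [hcdef, hddef, sub_dotProduct, dotProduct_sub,
        smul_dotProduct, dotProduct_smul, smul_eq_mul]
      rw [hsym2, hsym3, hsym1, hb]
      ring
    have step2 : star (w j) ⬝ᵥ (H j *ᵥ w j)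
        = star (w j) ⬝ᵥ (((Matrix.of fun i k => (H j i k).re : Matrix (Fin n) (Fin n) ℝ).map Complex.ofReal) *ᵥ w j)
          + Complex.I * (star (w j) ⬝ᵥ (((Matrix.of fun i k => (H j i k).im : Matrix (Fin n) (Fin n) ℝ).map Complex.ofReal) *ᵥ w j)) := by
      nth_rewrite 1 [hHdecomp j]
      rw [Matrix.add_mulVec, dotProduct_add, Matrix.smul_mulVec,
        dotProduct_smul, smul_eq_mul]
    have hβ' : (bC j ⬝ᵥ aC j).im = 0 := by
      simp [dotProduct, Complex.im_sum, hbCdef, haCdef]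
    rw [step1, step2, dot_eq_double, dot_eq_double]
    have hA0 := quad_im_symm _ (hAj j) (w j)
    have hG0 := quad_im_symm _ (hGj j) (w j)
    set QA := ∑ i, ∑ k, (starRingEnd ℂ) (w j i)
      * (((Matrix.of fun i k => (H j i k).re : Matrix (Fin n) (Fin n) ℝ) i k : ℂ) * w j k) with hQA
    set QG := ∑ i, ∑ k, (starRingEnd ℂ) (w j i)
      * (((Matrix.of fun i k => (H j i k).im : Matrix (Fin n) (Fin n) ℝ) i k : ℂ) * w j k) with hQG
    simp only [Complex.add_im, Complex.sub_im, Complex.mul_im, Complex.mul_re,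
      Complex.I_re, Complex.I_im, Complex.conj_re, Complex.conj_im, hA0, hG0, hβ']
    ring
  -- conclude each w j = 0
  have hwzero : ∀ j, w j = 0 := by
    have him : (∑ j, S j).im = 0 := by rw [hSsum]; rfl
    rw [Complex.im_sum] at him
    have hterms : ∀ j ∈ Finset.univ, (0:ℝ) ≤ (S j).im := by
      intro j _
      rw [hSim j]
      exact quad_re_nonneg (hHpos j) (w j)
    have hzero := (Finset.sum_eq_zero_iff_of_nonneg hterms).1 him
    intro j
    refine quad_re_zero_imp (hHpos j) (w j) ?_
    rw [← hSim j]
    exact hzero j (Finset.mem_univ j)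
  -- finish
  have hxt : ∀ j i, x i = t j * (a j i : ℂ) := by
    intro j i
    have h0 := congrFun (hwzero j) i
    simp only [hwdef, haCdef, Pi.sub_apply, Pi.smul_apply, smul_eq_mul, Pi.zero_apply,
      sub_eq_zero] at h0
    exact h0
  have hpair : ∀ r0 r1 : ℝ, (∀ i, r0 * a 0 i = r1 * a 1 i) → r0 = 0 ∧ r1 = 0 := by
    intro r0 r1 hr
    have h0 : (∑ i : Fin 2, (![r0, -r1]) i • (![a 0, a 1]) i) = 0 := by
      rw [Fin.sum_univ_two]
      funext i
      simp only [Matrix.cons_val_zero, Matrix.cons_val_one, Matrix.head_cons, Pi.add_apply,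
        Pi.smul_apply, smul_eq_mul, Pi.zero_apply]
      rw [hr i]; ring
    have hz := Fintype.linearIndependent_iff.1 hindep ![r0, -r1] h0
    refine ⟨hz 0, ?_⟩
    have := hz 1
    simpa [neg_eq_zero] using this
  have ht01 : t 0 = 0 ∧ t 1 = 0 := by
    have h : ∀ i, t 0 * (a 0 i : ℂ) = t 1 * (a 1 i : ℂ) :=
      fun i => (hxt 0 i).symm.trans (hxt 1 i)
    have hre := hpair (t 0).re (t 1).re (fun i => by
      have := congrArg Complex.re (h i)
      simpa [Complex.mul_re] using this)
    have him := hpair (t 0).im (t 1).im (fun i => by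
      have := congrArg Complex.im (h i)
      simpa [Complex.mul_im] using this)
    exact ⟨Complex.ext hre.1 him.1, Complex.ext hre.2 him.2⟩
  have hx0 : ∀ i, x i = 0 := fun i => by rw [hxt 0 i, ht01.1, zero_mul]
  obtain ⟨i0, hi0⟩ : ∃ i, a 0 i ≠ 0 := by
    by_contra hcon
    push_neg at hcon
    have h0 : a 0 = 0 := funext hcon
    have := hindep.ne_zero 0
    simp [h0] at this
  obtain ⟨i1, hi1⟩ : ∃ i, a 1 i ≠ 0 := by
    by_contra hcon
    push_neg at hcon
    have h0 : a 1 = 0 := funext hcon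
    have := hindep.ne_zero 1
    simp [h0] at this
  have ht2 : t 2 = 0 := by
    have h0 := hxt 2 i0
    rw [hx0 i0] at h0
    have h2 : ((a 2 i0 : ℝ) : ℂ) ≠ 0 := by
      rw [ha₂]
      simp only [Pi.smul_apply, smul_eq_mul, Complex.ofReal_eq_zero]
      exact Complex.ofReal_ne_zero.mpr (mul_ne_zero hlam₃ hi0)
    rcases mul_eq_zero.mp h0.symm with h | h
    · exact h
    · exact absurd h h2
  have ht3 : t 3 = 0 := by
    have h0 := hxt 3 i1
    rw [hx0 i1] at h0
    have h2 : ((a 3 i1 : ℝ) : ℂ) ≠ 0 := by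
      rw [ha₃]
      simp only [Pi.smul_apply, smul_eq_mul, Complex.ofReal_eq_zero]
      exact Complex.ofReal_ne_zero.mpr (mul_ne_zero hlam₄ hi1)
    rcases mul_eq_zero.mp h0.symm with h | h
    · exact h
    · exact absurd h h2
  apply hv
  funext p
  cases p with
  | inl i => exact hx0 i
  | inr j =>
    fin_cases j
    · exact ht01.1
    · exact ht01.2
    · exact ht2
    · exact ht3
end

section
/- Let X be a commutative complex Banach algebra (complete normed commutative ℂ-algebra with submultiplicative norm; a unit is not required). Let P, E : X → X be continuous linear operators with P(E f) = f for all f ∈ X. Let c₂, c₃, … ∈ X and M₀, δ₀ > 0 satisfy ‖c_j‖ ≤ j! · M₀ / δ₀^j for all j ≥ 2, and for ‖w‖ < δ₀ define a(w) = Σ_{j=2}^{∞} (1/j!) c_j w^j (the series converges absolutely). Then there exist δ > 0 and C > 0 such that for every v ∈ X with ‖v‖ < δ there exists u ∈ X with ‖u − v‖ ≤ C‖v‖² and P u + a(u) = P v. In particular, if P v = 0 then u solves P u + a(u) = 0. (This is the fixed-point solvability statement of Lemma 6.1, abstracted to the Banach algebra setting of H^s(M).) -/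
/-- `npow1 w k = w^(k+1)`: powers in a (possibly non-unital) multiplicative structure. -/
def npow1 {X : Type*} [Mul X] (w : X) : ℕ → X
  | 0 => w
  | k + 1 => w * npow1 w k

lemma norm_npow1_le {X : Type*} [NonUnitalNormedCommRing X] (w : X) :
    ∀ k, ‖npow1 w k‖ ≤ ‖w‖ ^ (k + 1)
  | 0 => by simp [npow1]
  | k + 1 => by
    calc ‖w * npow1 w k‖ ≤ ‖w‖ * ‖npow1 w k‖ := norm_mul_le _ _
      _ ≤ ‖w‖ * ‖w‖ ^ (k + 1) :=
        mul_le_mul_of_nonneg_left (norm_npow1_le w k) (norm_nonneg w)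
      _ = ‖w‖ ^ (k + 1 + 1) := by ring

lemma norm_npow1_sub_le {X : Type*} [NonUnitalNormedCommRing X] (w w' : X) (r : ℝ)
    (hw : ‖w‖ ≤ r) (hw' : ‖w'‖ ≤ r) :
    ∀ k, ‖npow1 w k - npow1 w' k‖ ≤ ((k : ℝ) + 1) * r ^ k * ‖w - w'‖
  | 0 => by simp [npow1]
  | k + 1 => by
    have hr : 0 ≤ r := (norm_nonneg w).trans hw
    have hd : npow1 w (k + 1) - npow1 w' (k + 1)
        = w * (npow1 w k - npow1 w' k) + (w - w') * npow1 w' k := by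
      simp only [npow1, mul_sub, sub_mul]; abel
    calc ‖npow1 w (k + 1) - npow1 w' (k + 1)‖
        ≤ ‖w * (npow1 w k - npow1 w' k)‖ + ‖(w - w') * npow1 w' k‖ := by
          rw [hd]; exact norm_add_le _ _
      _ ≤ ‖w‖ * ‖npow1 w k - npow1 w' k‖ + ‖w - w'‖ * ‖npow1 w' k‖ :=
          add_le_add (norm_mul_le _ _) (norm_mul_le _ _)
      _ ≤ r * (((k : ℝ) + 1) * r ^ k * ‖w - w'‖) + ‖w - w'‖ * r ^ (k + 1) := by
          refine add_le_add
            (mul_le_mul hw (norm_npow1_sub_le w w' r hw hw' k) (norm_nonneg _) hr)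
            (mul_le_mul_of_nonneg_left
              ((norm_npow1_le w' k).trans (pow_le_pow_left₀ (norm_nonneg _) hw' (k + 1)))
              (norm_nonneg _))
      _ = (((k + 1 : ℕ) : ℝ) + 1) * r ^ (k + 1) * ‖w - w'‖ := by push_cast; ring

/-- The fixed-point solvability statement of Lemma 6.1, abstracted to
the Banach-algebra setting of `H^s(M)`: if `P(Ef) = f` for all `f`, and
`a(w) = Σ_{j≥2} (1/j!) c_j wʲ` with `‖c_j‖ ≤ j!M₀/δ₀ʲ`, then there are `δ, C > 0`
such that for every `v` with `‖v‖ < δ` there is `u` with `‖u − v‖ ≤ C‖v‖²` and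
`Pu + a(u) = Pv`; in particular, if `Pv = 0` then `Pu + a(u) = 0`. -/
theorem semilinear_fixed_point_solvability {X : Type*}
    [NonUnitalNormedCommRing X] [NormedSpace ℂ X]
    [IsScalarTower ℂ X X] [SMulCommClass ℂ X X] [CompleteSpace X]
    (P E : X →L[ℂ] X) (hPE : ∀ f : X, P (E f) = f)
    (c : ℕ → X) (M₀ δ₀ : ℝ) (hM₀ : 0 < M₀) (hδ₀ : 0 < δ₀)
    (hc : ∀ j : ℕ, 2 ≤ j → ‖c j‖ ≤ (j.factorial : ℝ) * M₀ / δ₀ ^ j)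
    (a : X → X)
    (ha : ∀ w : X, ‖w‖ < δ₀ →
      a w = ∑' k : ℕ, ((((k + 2).factorial : ℂ))⁻¹ • (c (k + 2) * npow1 w (k + 1)))) :
    ∃ δ > (0:ℝ), ∃ C > (0:ℝ), ∀ v : X, ‖v‖ < δ →
      ∃ u : X, ‖u - v‖ ≤ C * ‖v‖ ^ 2 ∧ P u + a u = P v ∧ (P v = 0 → P u + a u = 0) := by
  classical
  set F : X → ℕ → X := fun w k =>
    ((((k + 2).factorial : ℂ))⁻¹ • (c (k + 2) * npow1 w (k + 1))) with hFdef
  have hnp0 : ∀ k, npow1 (0 : X) k = 0 := by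
    intro k; induction k with
    | zero => rfl
    | succ k ih => simp [npow1]
  have hF0 : ∀ k, F 0 k = 0 := by
    intro k; simp [hFdef, hnp0]
  have ha0 : a 0 = 0 := by
    rw [ha 0 (by simpa using hδ₀)]
    simp [hnp0]
  -- termwise bound
  have hterm : ∀ (w w' : X) (r : ℝ), ‖w‖ ≤ r → ‖w'‖ ≤ r → ∀ k : ℕ,
      ‖F w k - F w' k‖ ≤ (M₀ / δ₀ ^ 2 * r * ‖w - w'‖) * (((k : ℝ) + 2) * (r / δ₀) ^ k) := by
    intro w w' r hw hw' k
    have hr : 0 ≤ r := (norm_nonneg w).trans hw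
    have hfac : (0 : ℝ) < ((k + 2).factorial : ℝ) := by
      exact_mod_cast (k + 2).factorial_pos
    have h1 : F w k - F w' k
        = (((k + 2).factorial : ℂ))⁻¹ • (c (k + 2) * (npow1 w (k + 1) - npow1 w' (k + 1))) := by
      simp [hFdef, mul_sub, smul_sub]
    rw [h1, norm_smul]
    have hnorm : ‖(((k + 2).factorial : ℂ))⁻¹‖ = (((k + 2).factorial : ℝ))⁻¹ := by
      rw [norm_inv]
      norm_cast
    rw [hnorm]
    have h2 : ‖c (k + 2) * (npow1 w (k + 1) - npow1 w' (k + 1))‖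
        ≤ (((k + 2).factorial : ℝ) * M₀ / δ₀ ^ (k + 2))
            * ((((k : ℝ) + 1) + 1) * r ^ (k + 1) * ‖w - w'‖) := by
      calc ‖c (k + 2) * (npow1 w (k + 1) - npow1 w' (k + 1))‖
          ≤ ‖c (k + 2)‖ * ‖npow1 w (k + 1) - npow1 w' (k + 1)‖ := norm_mul_le _ _
        _ ≤ _ := by
            have hcb := hc (k + 2) (by omega)
            have hnb := norm_npow1_sub_le w w' r hw hw' (k + 1)
            have := mul_le_mul hcb hnb (norm_nonneg _) (by positivity)
            simpa [Nat.cast_add] using this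
    calc (((k + 2).factorial : ℝ))⁻¹ * ‖c (k + 2) * (npow1 w (k + 1) - npow1 w' (k + 1))‖
        ≤ (((k + 2).factorial : ℝ))⁻¹ *
            ((((k + 2).factorial : ℝ) * M₀ / δ₀ ^ (k + 2))
              * ((((k : ℝ) + 1) + 1) * r ^ (k + 1) * ‖w - w'‖)) :=
          mul_le_mul_of_nonneg_left h2 (by positivity)
      _ = (M₀ / δ₀ ^ 2 * r * ‖w - w'‖) * (((k : ℝ) + 2) * (r / δ₀) ^ k) := by
          rw [div_pow]
          field_simp
          ring
  -- geometric domination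
  have hgeo : ∀ r : ℝ, 0 ≤ r → r ≤ δ₀ / 4 → ∀ k : ℕ,
      ((k : ℝ) + 2) * (r / δ₀) ^ k ≤ 2 * (1 / 2 : ℝ) ^ k := by
    intro r hr hr4 k
    have hx : 0 ≤ r / δ₀ := by positivity
    have hx4 : r / δ₀ ≤ 1 / 4 := by
      rw [div_le_div_iff₀ hδ₀ (by norm_num)]
      linarith
    have h2 : ((k : ℝ) + 2) ≤ 2 ^ (k + 1) := by
      have := Nat.lt_two_pow_self (n := k + 1)
      have h := Nat.succ_le_of_lt this
      exact_mod_cast h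
    calc ((k : ℝ) + 2) * (r / δ₀) ^ k
        ≤ 2 ^ (k + 1) * (1 / 4 : ℝ) ^ k :=
          mul_le_mul h2 (pow_le_pow_left₀ hx hx4 k) (by positivity) (by positivity)
      _ = 2 * (1 / 2 : ℝ) ^ k := by
          rw [pow_succ']
          rw [mul_assoc, ← mul_pow]
          norm_num
  have hhalf : Summable (fun k : ℕ => (1 / 2 : ℝ) ^ k) :=
    summable_geometric_of_lt_one (by norm_num) (by norm_num)
  -- summability of F w
  have hFsum : ∀ w : X, ‖w‖ ≤ δ₀ / 4 → Summable (F w) := by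
    intro w hw
    apply Summable.of_norm_bounded
      (g := fun k => (M₀ / δ₀ ^ 2 * (δ₀ / 4) * ‖w‖ * 2) * (1 / 2 : ℝ) ^ k)
      (hhalf.mul_left _)
    intro k
    calc ‖F w k‖ = ‖F w k - F 0 k‖ := by rw [hF0, sub_zero]
      _ ≤ (M₀ / δ₀ ^ 2 * (δ₀ / 4) * ‖w - 0‖) * (((k : ℝ) + 2) * ((δ₀ / 4) / δ₀) ^ k) :=
          hterm w 0 (δ₀ / 4) hw (by simp; positivity) k
      _ ≤ (M₀ / δ₀ ^ 2 * (δ₀ / 4) * ‖w‖) * (2 * (1 / 2 : ℝ) ^ k) := by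
          rw [sub_zero]
          exact mul_le_mul_of_nonneg_left
            (hgeo (δ₀ / 4) (by positivity) le_rfl k) (by positivity)
      _ = (M₀ / δ₀ ^ 2 * (δ₀ / 4) * ‖w‖ * 2) * (1 / 2 : ℝ) ^ k := by ring
  -- Lipschitz-type estimate
  have hlip : ∀ (r : ℝ) (w w' : X), r ≤ δ₀ / 4 → ‖w‖ ≤ r → ‖w'‖ ≤ r →
      ‖a w - a w'‖ ≤ (4 * M₀ * r / δ₀ ^ 2) * ‖w - w'‖ := by
    intro r w w' hr4 hw hw'
    have hr : 0 ≤ r := (norm_nonneg w).trans hw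
    have hwδ : ‖w‖ < δ₀ := lt_of_le_of_lt (hw.trans hr4) (by linarith)
    have hw'δ : ‖w'‖ < δ₀ := lt_of_le_of_lt (hw'.trans hr4) (by linarith)
    have hs1 : Summable (F w) := hFsum w (hw.trans hr4)
    have hs2 : Summable (F w') := hFsum w' (hw'.trans hr4)
    have hbound : ∀ k : ℕ, ‖F w k - F w' k‖
        ≤ (M₀ / δ₀ ^ 2 * r * ‖w - w'‖ * 2) * (1 / 2 : ℝ) ^ k := by
      intro k
      calc ‖F w k - F w' k‖
          ≤ (M₀ / δ₀ ^ 2 * r * ‖w - w'‖) * (((k : ℝ) + 2) * (r / δ₀) ^ k) :=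
            hterm w w' r hw hw' k
        _ ≤ (M₀ / δ₀ ^ 2 * r * ‖w - w'‖) * (2 * (1 / 2 : ℝ) ^ k) :=
            mul_le_mul_of_nonneg_left (hgeo r hr hr4 k) (by positivity)
        _ = (M₀ / δ₀ ^ 2 * r * ‖w - w'‖ * 2) * (1 / 2 : ℝ) ^ k := by ring
    have hnsum : Summable (fun k => ‖F w k - F w' k‖) :=
      Summable.of_nonneg_of_le (fun k => norm_nonneg _) hbound (hhalf.mul_left _)
    have heq : a w - a w' = ∑' k, (F w k - F w' k) := by
      rw [ha w hwδ, ha w' hw'δ, Summable.tsum_sub hs1 hs2]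
    calc ‖a w - a w'‖ = ‖∑' k, (F w k - F w' k)‖ := by rw [heq]
      _ ≤ ∑' k, ‖F w k - F w' k‖ := norm_tsum_le_tsum_norm hnsum
      _ ≤ ∑' k : ℕ, (M₀ / δ₀ ^ 2 * r * ‖w - w'‖ * 2) * (1 / 2 : ℝ) ^ k :=
          Summable.tsum_le_tsum hbound hnsum (hhalf.mul_left _)
      _ = (M₀ / δ₀ ^ 2 * r * ‖w - w'‖ * 2) * ∑' k : ℕ, (1 / 2 : ℝ) ^ k :=
          tsum_mul_left
      _ = (4 * M₀ * r / δ₀ ^ 2) * ‖w - w'‖ := by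
          rw [tsum_geometric_of_lt_one (by norm_num) (by norm_num)]
          norm_num
          ring
  -- quadratic bound
  have hbnd : ∀ w : X, ‖w‖ ≤ δ₀ / 4 → ‖a w‖ ≤ (4 * M₀ / δ₀ ^ 2) * ‖w‖ ^ 2 := by
    intro w hw
    have := hlip ‖w‖ w 0 hw le_rfl (by simp)
    rw [ha0, sub_zero, sub_zero] at this
    calc ‖a w‖ ≤ (4 * M₀ * ‖w‖ / δ₀ ^ 2) * ‖w‖ := this
      _ = (4 * M₀ / δ₀ ^ 2) * ‖w‖ ^ 2 := by ring
  -- constants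
  set N : ℝ := ‖E‖ + 1 with hNdef
  have hN : 0 < N := by positivity
  have hEN : ‖E‖ ≤ N := by simp [hNdef]
  set C : ℝ := 16 * N * M₀ / δ₀ ^ 2 with hCdef
  have hC : 0 < C := by positivity
  refine ⟨min (δ₀ / 8) (δ₀ ^ 2 / (32 * N * M₀)), lt_min (by positivity) (by positivity),
    C, hC, ?_⟩
  intro v hv
  have hv1 : ‖v‖ < δ₀ / 8 := hv.trans_le (min_le_left _ _)
  have hv2 : ‖v‖ < δ₀ ^ 2 / (32 * N * M₀) := hv.trans_le (min_le_right _ _)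
  set ρ : ℝ := C * ‖v‖ ^ 2 with hρdef
  have hρ0 : 0 ≤ ρ := by positivity
  have hρ1 : ρ ≤ ‖v‖ / 2 := by
    have hCv : C * ‖v‖ ≤ 1 / 2 := by
      calc C * ‖v‖ ≤ C * (δ₀ ^ 2 / (32 * N * M₀)) :=
            mul_le_mul_of_nonneg_left hv2.le hC.le
        _ = 1 / 2 := by rw [hCdef]; field_simp; ring
    calc ρ = C * ‖v‖ * ‖v‖ := by rw [hρdef]; ring
      _ ≤ 1 / 2 * ‖v‖ := mul_le_mul_of_nonneg_right hCv (norm_nonneg v)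
      _ = ‖v‖ / 2 := by ring
  have hball : ∀ u : X, u ∈ Metric.closedBall v ρ → ‖u‖ ≤ 2 * ‖v‖ := by
    intro u hu
    have h1 : ‖u - v‖ ≤ ρ := by rwa [Metric.mem_closedBall, dist_eq_norm] at hu
    have h2 : ‖u‖ ≤ ‖u - v‖ + ‖v‖ := by
      have := norm_add_le (u - v) v
      simpa using this
    linarith
  have h2v : 2 * ‖v‖ ≤ δ₀ / 4 := by linarith
  haveI : Nonempty (Metric.closedBall v ρ) := ⟨⟨v, Metric.mem_closedBall_self hρ0⟩⟩
  haveI : CompleteSpace (Metric.closedBall v ρ) :=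
    Metric.isClosed_closedBall.completeSpace_coe
  -- the contraction map
  set T : Metric.closedBall v ρ → Metric.closedBall v ρ := fun x =>
    ⟨v - E (a x), by
      rw [Metric.mem_closedBall, dist_eq_norm]
      have hx : ‖(x : X)‖ ≤ 2 * ‖v‖ := hball x x.2
      have hax : ‖a (x : X)‖ ≤ (4 * M₀ / δ₀ ^ 2) * ‖(x : X)‖ ^ 2 :=
        hbnd _ (hx.trans h2v)
      have hax2 : ‖a (x : X)‖ ≤ (4 * M₀ / δ₀ ^ 2) * (2 * ‖v‖) ^ 2 := by
        refine hax.trans (mul_le_mul_of_nonneg_left ?_ (by positivity))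
        exact pow_le_pow_left₀ (norm_nonneg _) hx 2
      have hvv : v - E (a (x : X)) - v = -(E (a (x : X))) := by abel
      rw [hvv, norm_neg]
      calc ‖E (a (x : X))‖ ≤ ‖E‖ * ‖a (x : X)‖ := E.le_opNorm _
        _ ≤ N * ((4 * M₀ / δ₀ ^ 2) * (2 * ‖v‖) ^ 2) :=
            mul_le_mul hEN hax2 (norm_nonneg _) hN.le
        _ = ρ := by rw [hρdef, hCdef]; ring⟩ with hTdef
  have hcontract : ContractingWith (1 / 2 : NNReal) T := by
    constructor
    · rw [← NNReal.coe_lt_coe]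
      norm_num
    · apply LipschitzWith.of_dist_le_mul
      intro x y
      have hcoe : ((1 / 2 : NNReal) : ℝ) = 1 / 2 := by norm_num
      rw [hcoe, Subtype.dist_eq, Subtype.dist_eq, dist_eq_norm, dist_eq_norm]
      have hTx : ((T x : X)) = v - E (a (x : X)) := rfl
      have hTy : ((T y : X)) = v - E (a (y : X)) := rfl
      rw [hTx, hTy]
      have hd : (v - E (a (x : X))) - (v - E (a (y : X)))
          = -(E (a (x : X) - a (y : X))) := by
        rw [map_sub]; abel
      rw [hd, norm_neg]
      have hcoef : N * (4 * M₀ * (2 * ‖v‖) / δ₀ ^ 2) ≤ 1 / 2 := by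
        have h8 : (0 : ℝ) ≤ 8 * N * M₀ / δ₀ ^ 2 := by positivity
        calc N * (4 * M₀ * (2 * ‖v‖) / δ₀ ^ 2) = (8 * N * M₀ / δ₀ ^ 2) * ‖v‖ := by ring
          _ ≤ (8 * N * M₀ / δ₀ ^ 2) * (δ₀ ^ 2 / (32 * N * M₀)) :=
              mul_le_mul_of_nonneg_left hv2.le h8
          _ = 1 / 4 := by field_simp; ring
          _ ≤ 1 / 2 := by norm_num
      calc ‖E (a (x : X) - a (y : X))‖ ≤ ‖E‖ * ‖a (x : X) - a (y : X)‖ := E.le_opNorm _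
        _ ≤ N * ((4 * M₀ * (2 * ‖v‖) / δ₀ ^ 2) * ‖(x : X) - (y : X)‖) :=
            mul_le_mul hEN
              (hlip (2 * ‖v‖) _ _ h2v (hball _ x.2) (hball _ y.2))
              (norm_nonneg _) hN.le
        _ = (N * (4 * M₀ * (2 * ‖v‖) / δ₀ ^ 2)) * ‖(x : X) - (y : X)‖ := by ring
        _ ≤ (1 / 2) * ‖(x : X) - (y : X)‖ :=
            mul_le_mul_of_nonneg_right hcoef (norm_nonneg _)
  set z : Metric.closedBall v ρ := ContractingWith.fixedPoint T hcontract with hz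
  have hfz : T z = z := hcontract.fixedPoint_isFixedPt
  have h1 : v - E (a (z : X)) = (z : X) := congrArg Subtype.val hfz
  have h2 : (z : X) + E (a (z : X)) = v := (sub_eq_iff_eq_add.mp h1).symm
  have hPu : P (z : X) + a (z : X) = P v := by
    calc P (z : X) + a (z : X) = P (z : X) + P (E (a (z : X))) := by rw [hPE]
      _ = P ((z : X) + E (a (z : X))) := (map_add P _ _).symm
      _ = P v := by rw [h2]
  refine ⟨(z : X), ?_, hPu, fun h => hPu.trans h⟩
  have := z.2
  rw [Metric.mem_closedBall, dist_eq_norm] at this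
  exact this.trans_eq hρdef
end

section
/- Let n ≥ 1, T > 0, let x : [0, T] → ℝⁿ be continuous, and let Φ : ℝⁿ × ℝ → ℂ be twice continuously differentiable. Assume that for every t ∈ [0, T]: Im Φ(x(t), t) = 0, the gradient in the first variable ∇_x Im Φ(x(t), t) = 0, and the Hessian in the first variable ∇²_x Im Φ(x(t), t) is positive definite. Then there exist ε > 0 and c > 0 such that Im Φ(y, t) ≥ c · |y − x(t)|² whenever t ∈ [0, T] and |y − x(t)| ≤ ε, where |·| is the Euclidean norm. (This is the uniform Gaussian lower bound (3.15) for the imaginary part of the Gaussian-beam phase, proved in Step 5 of Theorem 3.1.) -/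
open Set Metric

section Aux

variable {E : Type*} [NormedAddCommGroup E] [NormedSpace ℝ E]

/-- The second derivative quadratic form in the first variable. -/
noncomputable def Qform (F : E × ℝ → ℝ) (p : E × ℝ) (v : E) : ℝ :=
  fderiv ℝ (fderiv ℝ F) p (v, 0) (v, 0)

lemma Qform_smul (F : E × ℝ → ℝ) (p : E × ℝ) (a : ℝ) (v : E) :
    Qform F p (a • v) = a ^ 2 * Qform F p v := by
  have h : ((a • v, (0:ℝ)) : E × ℝ) = a • ((v, 0) : E × ℝ) := by
    rw [Prod.smul_mk, smul_zero]
  simp only [Qform, h, map_smul, ContinuousLinearMap.smul_apply, smul_eq_mul]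
  ring

lemma Qform_continuous (F : E × ℝ → ℝ) (hF : ContDiff ℝ 2 F) :
    Continuous fun q : (E × ℝ) × E => Qform F q.1 q.2 := by
  have hGc : ContDiff ℝ 1 (fderiv ℝ F) := hF.fderiv_right (by norm_num)
  have hc : Continuous (fderiv ℝ (fderiv ℝ F)) := hGc.continuous_fderiv one_ne_zero
  have h1 : Continuous fun q : (E × ℝ) × E => fderiv ℝ (fderiv ℝ F) q.1 :=
    hc.comp continuous_fst
  have h2 : Continuous fun q : (E × ℝ) × E => ((q.2, (0:ℝ)) : E × ℝ) :=
    continuous_snd.prodMk continuous_const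
  exact (h1.clm_apply h2).clm_apply h2

lemma auxPath (c v : E) (t s : ℝ) :
    HasDerivAt (fun s' : ℝ => ((c + s' • v, t) : E × ℝ)) ((v, 0) : E × ℝ) s := by
  have h1 : HasDerivAt (fun s' : ℝ => c + s' • v) v s := by
    simpa using ((hasDerivAt_id s).smul_const v).const_add c
  exact h1.prodMk (hasDerivAt_const s t)

lemma auxL1 (F : E × ℝ → ℝ) (hF : ContDiff ℝ 2 F) (t : ℝ) (y v : E) :
    fderiv ℝ (fun z : E => F (z, t)) y v = fderiv ℝ F (y, t) (v, 0) := by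
  have hpath : HasFDerivAt (fun z : E => ((z, t) : E × ℝ))
      ((ContinuousLinearMap.id ℝ E).prod 0) y :=
    (hasFDerivAt_id y).prodMk (hasFDerivAt_const t y)
  have h : HasFDerivAt (fun z : E => F (z, t))
      ((fderiv ℝ F (y, t)).comp ((ContinuousLinearMap.id ℝ E).prod 0)) y :=
    ((hF.differentiable (by norm_num) (y, t)).hasFDerivAt).comp y hpath
  rw [h.fderiv]
  simp

lemma auxL2 (F : E × ℝ → ℝ) (hF : ContDiff ℝ 2 F) (t : ℝ) (y v w : E) :
    fderiv ℝ (fun y' : E => fderiv ℝ (fun z : E => F (z, t)) y' v) y w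
      = fderiv ℝ (fderiv ℝ F) (y, t) (w, 0) (v, 0) := by
  have hfun : (fun y' : E => fderiv ℝ (fun z : E => F (z, t)) y' v)
      = fun y' : E => fderiv ℝ F (y', t) ((v, 0) : E × ℝ) :=
    funext fun y' => auxL1 F hF t y' v
  rw [hfun]
  have hGd : Differentiable ℝ (fderiv ℝ F) :=
    (hF.fderiv_right (m := 1) (by norm_num)).differentiable one_ne_zero
  have hpath : HasFDerivAt (fun z : E => ((z, t) : E × ℝ))
      ((ContinuousLinearMap.id ℝ E).prod 0) y :=
    (hasFDerivAt_id y).prodMk (hasFDerivAt_const t y)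
  have h1 : HasFDerivAt (fun z : E => fderiv ℝ F (z, t))
      ((fderiv ℝ (fderiv ℝ F) (y, t)).comp ((ContinuousLinearMap.id ℝ E).prod 0)) y :=
    ((hGd (y, t)).hasFDerivAt).comp y hpath
  have h2 : HasFDerivAt (fun y' : E => fderiv ℝ F (y', t) ((v, 0) : E × ℝ))
      ((ContinuousLinearMap.apply ℝ ℝ ((v, 0) : E × ℝ)).comp
        ((fderiv ℝ (fderiv ℝ F) (y, t)).comp ((ContinuousLinearMap.id ℝ E).prod 0))) y :=
    (ContinuousLinearMap.apply ℝ ℝ ((v, 0) : E × ℝ)).hasFDerivAt.comp y h1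
  rw [h2.fderiv]
  simp

set_option maxHeartbeats 2000000 in
theorem main_aux (n : ℕ) (hn : 1 ≤ n) (T : ℝ) (hT : 0 < T)
    (x : ℝ → EuclideanSpace ℝ (Fin n)) (hx : ContinuousOn x (Set.Icc 0 T))
    (F : EuclideanSpace ℝ (Fin n) × ℝ → ℝ) (hF : ContDiff ℝ 2 F)
    (h0 : ∀ t ∈ Set.Icc (0:ℝ) T, F (x t, t) = 0)
    (h1 : ∀ t ∈ Set.Icc (0:ℝ) T,
      fderiv ℝ (fun z : EuclideanSpace ℝ (Fin n) => F (z, t)) (x t) = 0)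
    (h2 : ∀ t ∈ Set.Icc (0:ℝ) T, ∀ v : EuclideanSpace ℝ (Fin n), v ≠ 0 →
      0 < fderiv ℝ (fun y => fderiv ℝ (fun z : EuclideanSpace ℝ (Fin n) => F (z, t)) y v)
        (x t) v) :
    ∃ ε > (0:ℝ), ∃ c > (0:ℝ), ∀ t ∈ Set.Icc (0:ℝ) T, ∀ y : EuclideanSpace ℝ (Fin n),
      ‖y - x t‖ ≤ ε → c * ‖y - x t‖ ^ 2 ≤ F (y, t) := by
  have hFd : Differentiable ℝ F := hF.differentiable (by norm_num)
  have hGd : Differentiable ℝ (fderiv ℝ F) :=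
    (hF.fderiv_right (m := 1) (by norm_num)).differentiable one_ne_zero
  -- positivity of the Hessian form on the curve
  have hQpos : ∀ t ∈ Set.Icc (0:ℝ) T, ∀ v : EuclideanSpace ℝ (Fin n), v ≠ 0 →
      0 < Qform F (x t, t) v := by
    intro t ht v hv
    have e := auxL2 F hF t (x t) v v
    have h := h2 t ht v hv
    rw [e] at h
    exact h
  -- compact sets
  set K : Set (EuclideanSpace ℝ (Fin n) × ℝ) :=
    (fun t => ((x t, t) : EuclideanSpace ℝ (Fin n) × ℝ)) '' Set.Icc 0 T with hKdef
  have hK : IsCompact K :=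
    isCompact_Icc.image_of_continuousOn (hx.prodMk continuousOn_id)
  have hKne : K.Nonempty := ⟨(x 0, 0), ⟨0, left_mem_Icc.2 hT.le, rfl⟩⟩
  set S : Set (EuclideanSpace ℝ (Fin n)) := Metric.sphere 0 1 with hSdef
  have hS : IsCompact S := isCompact_sphere 0 1
  have hSne : S.Nonempty := by
    refine ⟨EuclideanSpace.single (⟨0, hn⟩ : Fin n) (1:ℝ), ?_⟩
    simp [hSdef, EuclideanSpace.norm_single]
  -- minimum of the Hessian form over K × S
  obtain ⟨⟨p₀, u₀⟩, hmem, hmin⟩ :=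
    (hK.prod hS).exists_isMinOn (hKne.prod hSne)
      ((Qform_continuous F hF).continuousOn)
  set m : ℝ := Qform F p₀ u₀ with hmdef
  have hm : 0 < m := by
    obtain ⟨⟨t₀, ht₀, hpt⟩, hu₀⟩ := hmem
    have hu0 : u₀ ≠ 0 := by
      intro h
      rw [h] at hu₀
      simp [hSdef] at hu₀
    have hpt' : ((x t₀, t₀) : EuclideanSpace ℝ (Fin n) × ℝ) = p₀ := hpt
    rw [hmdef, ← hpt']
    exact hQpos t₀ ht₀ u₀ hu0
  -- tube lemma + thickening
  have hNopen : IsOpen {q : (EuclideanSpace ℝ (Fin n) × ℝ) × EuclideanSpace ℝ (Fin n) |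
      m / 2 < Qform F q.1 q.2} :=
    isOpen_lt continuous_const (Qform_continuous F hF)
  have hsub : K ×ˢ S ⊆ {q : (EuclideanSpace ℝ (Fin n) × ℝ) × EuclideanSpace ℝ (Fin n) |
      m / 2 < Qform F q.1 q.2} := by
    intro q hq
    have := hmin hq
    simp only [Set.mem_setOf_eq]
    calc m / 2 < m := half_lt_self hm
    _ ≤ Qform F q.1 q.2 := this
  obtain ⟨U, V, hUo, hVo, hKU, hSV, hUV⟩ := generalized_tube_lemma hK hS hNopen hsub
  obtain ⟨δ, hδ, hthick⟩ := hK.exists_thickening_subset_open hUo hKU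
  refine ⟨δ / 2, by positivity, m / 4, by positivity, ?_⟩
  intro t ht y hy
  set v : EuclideanSpace ℝ (Fin n) := y - x t with hvdef
  rcases eq_or_ne v 0 with hv0 | hv0
  · have hxy : y = x t := sub_eq_zero.1 hv0
    have h00 : F (y, t) = 0 := by rw [hxy]; exact h0 t ht
    rw [hv0, h00]
    simp
  · have hvpos : (0:ℝ) < ‖v‖ := norm_pos_iff.2 hv0
    -- Hessian bound along the segment
    have hseg : ∀ s ∈ Set.Icc (0:ℝ) 1,
        m / 2 * ‖v‖ ^ 2 ≤ Qform F (x t + s • v, t) v := by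
      intro s hs
      have hmemU : ((x t + s • v, t) : EuclideanSpace ℝ (Fin n) × ℝ) ∈ U := by
        apply hthick
        refine Metric.mem_thickening_iff.2 ⟨(x t, t), ⟨t, ht, rfl⟩, ?_⟩
        rw [Prod.dist_eq]
        have hd1 : dist (x t + s • v) (x t) = s * ‖v‖ := by
          rw [dist_eq_norm]
          simp [norm_smul, abs_of_nonneg hs.1]
        have hd2 : dist t t = 0 := dist_self t
        rw [hd1, hd2]
        have hsv : s * ‖v‖ ≤ ‖v‖ := by nlinarith [hs.1, hs.2, hvpos]
        have : ‖v‖ ≤ δ / 2 := hy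
        have : s * ‖v‖ < δ := by linarith
        exact max_lt this hδ
      set w : EuclideanSpace ℝ (Fin n) := ‖v‖⁻¹ • v with hwdef
      have hwS : w ∈ S := by
        have hw1 : ‖w‖ = 1 := by
          rw [hwdef, norm_smul, norm_inv, norm_norm, inv_mul_cancel₀ hvpos.ne']
        simpa [hSdef, mem_sphere_zero_iff_norm] using hw1
      have hmem2 : (((x t + s • v, t), w) :
          (EuclideanSpace ℝ (Fin n) × ℝ) × EuclideanSpace ℝ (Fin n)) ∈ U ×ˢ V :=
        ⟨hmemU, hSV hwS⟩
      have hQw : m / 2 < Qform F (x t + s • v, t) w := hUV hmem2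
      calc m / 2 * ‖v‖ ^ 2 ≤ Qform F (x t + s • v, t) w * ‖v‖ ^ 2 :=
        mul_le_mul_of_nonneg_right hQw.le (sq_nonneg _)
      _ = Qform F (x t + s • v, t) v := by
        rw [hwdef, Qform_smul, inv_pow]
        field_simp
    -- derivative computations
    have hgderiv : ∀ s : ℝ, HasDerivAt (fun s' : ℝ => F (x t + s' • v, t))
        (fderiv ℝ F (x t + s • v, t) ((v, 0) : EuclideanSpace ℝ (Fin n) × ℝ)) s := by
      intro s
      exact ((hFd _).hasFDerivAt).comp_hasDerivAt s (auxPath (x t) v t s)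
    have hg1deriv : ∀ s : ℝ, HasDerivAt
        (fun s' : ℝ => fderiv ℝ F (x t + s' • v, t) ((v, 0) : EuclideanSpace ℝ (Fin n) × ℝ))
        (Qform F (x t + s • v, t) v) s := by
      intro s
      have h := ((hGd _).hasFDerivAt).comp_hasDerivAt s (auxPath (x t) v t s)
      have h2 := (ContinuousLinearMap.apply ℝ ℝ
        ((v, 0) : EuclideanSpace ℝ (Fin n) × ℝ)).hasFDerivAt.comp_hasDerivAt s h
      exact h2
    -- gradient vanishes at s = 0
    have hG0 : fderiv ℝ F (x t, t) ((v, 0) : EuclideanSpace ℝ (Fin n) × ℝ) = 0 := by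
      have e := auxL1 F hF t (x t) v
      rw [h1 t ht] at e
      simpa using e.symm
    -- first monotonicity: bound on the first derivative
    set φ : ℝ → ℝ := fun s =>
      fderiv ℝ F (x t + s • v, t) ((v, 0) : EuclideanSpace ℝ (Fin n) × ℝ)
        - m / 2 * ‖v‖ ^ 2 * s with hφdef
    have hφd : ∀ s : ℝ, HasDerivAt φ
        (Qform F (x t + s • v, t) v - m / 2 * ‖v‖ ^ 2) s := by
      intro s
      have h := (hg1deriv s).sub ((hasDerivAt_id s).const_mul (m / 2 * ‖v‖ ^ 2))
      exact h.congr_deriv (by ring)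
    have hφmono : MonotoneOn φ (Set.Icc 0 1) := by
      apply monotoneOn_of_deriv_nonneg (convex_Icc 0 1)
      · exact fun s _ => (hφd s).continuousAt.continuousWithinAt
      · exact fun s _ => (hφd s).differentiableAt.differentiableWithinAt
      · intro s hs
        rw [interior_Icc] at hs
        rw [(hφd s).deriv]
        have := hseg s ⟨hs.1.le, hs.2.le⟩
        linarith
    have hφbound : ∀ s ∈ Set.Icc (0:ℝ) 1,
        m / 2 * ‖v‖ ^ 2 * s ≤
          fderiv ℝ F (x t + s • v, t) ((v, 0) : EuclideanSpace ℝ (Fin n) × ℝ) := by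
      intro s hs
      have h := hφmono (left_mem_Icc.2 zero_le_one) hs hs.1
      have hφ0 : φ 0 = 0 := by
        simp [hφdef, hG0]
      rw [hφ0] at h
      simp only [hφdef] at h
      linarith
    -- second monotonicity: bound on F
    set ψ : ℝ → ℝ := fun s => F (x t + s • v, t) - m / 4 * ‖v‖ ^ 2 * s ^ 2 with hψdef
    have hψd : ∀ s : ℝ, HasDerivAt ψ
        (fderiv ℝ F (x t + s • v, t) ((v, 0) : EuclideanSpace ℝ (Fin n) × ℝ)
          - m / 2 * ‖v‖ ^ 2 * s) s := by
      intro s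
      have hp : HasDerivAt (fun s' : ℝ => m / 4 * ‖v‖ ^ 2 * s' ^ 2)
          (m / 2 * ‖v‖ ^ 2 * s) s := by
        have := (hasDerivAt_pow 2 s).const_mul (m / 4 * ‖v‖ ^ 2)
        exact this.congr_deriv (by ring)
      exact (hgderiv s).sub hp
    have hψmono : MonotoneOn ψ (Set.Icc 0 1) := by
      apply monotoneOn_of_deriv_nonneg (convex_Icc 0 1)
      · exact fun s _ => (hψd s).continuousAt.continuousWithinAt
      · exact fun s _ => (hψd s).differentiableAt.differentiableWithinAt
      · intro s hs
        rw [interior_Icc] at hs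
        rw [(hψd s).deriv]
        have := hφbound s ⟨hs.1.le, hs.2.le⟩
        linarith
    have hψ01 : ψ 0 ≤ ψ 1 :=
      hψmono (left_mem_Icc.2 zero_le_one) (right_mem_Icc.2 zero_le_one) zero_le_one
    have hψ0 : ψ 0 = 0 := by
      simp [hψdef, h0 t ht]
    have hψ1 : ψ 1 = F (y, t) - m / 4 * ‖v‖ ^ 2 := by
      simp [hψdef, hvdef]
    rw [hψ0, hψ1] at hψ01
    linarith

end Aux

/-- The uniform Gaussian lower bound (3.15) for the imaginary part of
the Gaussian-beam phase (Step 5 of Theorem 3.1): if `Φ` is `C²`, `Im Φ(x(t), t) = 0`,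
`∇ₓ Im Φ(x(t), t) = 0` and `∇²ₓ Im Φ(x(t), t)` is positive definite for all
`t ∈ [0, T]` (with `x` continuous on `[0, T]`), then there are `ε, c > 0` with
`Im Φ(y, t) ≥ c|y − x(t)|²` whenever `t ∈ [0, T]` and `|y − x(t)| ≤ ε`. -/
theorem gaussian_beam_phase_lower_bound (n : ℕ) (hn : 1 ≤ n) (T : ℝ) (hT : 0 < T)
    (x : ℝ → EuclideanSpace ℝ (Fin n)) (hx : ContinuousOn x (Set.Icc 0 T))
    (Φ : EuclideanSpace ℝ (Fin n) → ℝ → ℂ)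
    (hΦ : ContDiff ℝ 2 (fun p : EuclideanSpace ℝ (Fin n) × ℝ => Φ p.1 p.2))
    (h0 : ∀ t ∈ Set.Icc (0:ℝ) T, (Φ (x t) t).im = 0)
    (h1 : ∀ t ∈ Set.Icc (0:ℝ) T, fderiv ℝ (fun y => (Φ y t).im) (x t) = 0)
    (h2 : ∀ t ∈ Set.Icc (0:ℝ) T, ∀ v : EuclideanSpace ℝ (Fin n), v ≠ 0 →
      0 < fderiv ℝ (fun y => fderiv ℝ (fun z => (Φ z t).im) y v) (x t) v) :
    ∃ ε > (0:ℝ), ∃ c > (0:ℝ), ∀ t ∈ Set.Icc (0:ℝ) T, ∀ y : EuclideanSpace ℝ (Fin n),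
      ‖y - x t‖ ≤ ε → c * ‖y - x t‖ ^ 2 ≤ (Φ y t).im := by
  have hF : ContDiff ℝ 2 (fun p : EuclideanSpace ℝ (Fin n) × ℝ => (Φ p.1 p.2).im) :=
    Complex.imCLM.contDiff.comp hΦ
  exact main_aux n hn T hT x hx (fun p => (Φ p.1 p.2).im) hF h0 h1 h2
end
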